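/- arXiv:1106.3063 — 3 statements merged into one kernel-verified Lean document; each statement's English description precedes it below -/
import Mathlib

section
/- For every integer j ≥ 0 and all integers a, b ≥ 1 such that j + 2 + a + b is odd, the rooted tree RT(0^j, a, b) is super edge-graceful if and only if it is not the case that a = 1, and j and b are both odd with j = 1 or b = 1 (where without loss of generality a ≤ b). Equivalently: every caterpillar of diameter 4 with an odd number of edges is super edge-graceful, except the trees RT(0^j, 1, b) where j and b are positive odd integers with j = 1 or b = 1. -/
/-- Edge type of the rooted tree `RT(a₀, …, a_{n-1})`: one edge from the root to each
child `i` (`Sum.inl i`), and one edge from child `i` to each of its `a i` leaf children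
(`Sum.inr ⟨i, m⟩`).  The number of edges is `q = n + ∑ i, a i`. -/
abbrev RTEdge (n : ℕ) (a : Fin n → ℕ) := (Fin n) ⊕ (Σ i : Fin n, Fin (a i))

/-- Vertex type of the rooted tree `RT(a₀, …, a_{n-1})`: the root (`none`), the children
`some (.inl i)` of the root, and the leaves `some (.inr ⟨i, m⟩)` attached to child `i`.
The number of vertices is `p = q + 1`. -/
abbrev RTVertex (n : ℕ) (a : Fin n → ℕ) := Option (RTEdge n a)

/-- The vertex labeling induced by an edge labeling `f`: each vertex gets the sum of the
labels of the edges incident with it. -/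
def vertexSum {n : ℕ} (a : Fin n → ℕ) (f : RTEdge n a → ℤ) : RTVertex n a → ℤ
  | none => ∑ i : Fin n, f (Sum.inl i)
  | some (Sum.inl i) => f (Sum.inl i) + ∑ m : Fin (a i), f (Sum.inr ⟨i, m⟩)
  | some (Sum.inr ⟨i, m⟩) => f (Sum.inr ⟨i, m⟩)

/-- The target label set for `q` objects: `{0, ±1, …, ±(q-1)/2}` if `q` is odd, and
`{±1, …, ±(q/2)}` if `q` is even. -/
noncomputable def segSet (q : ℕ) : Finset ℤ :=
  if q % 2 = 0 then (Finset.Icc (-((q / 2 : ℕ) : ℤ)) ((q / 2 : ℕ) : ℤ)).erase 0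
  else Finset.Icc (-((q / 2 : ℕ) : ℤ)) ((q / 2 : ℕ) : ℤ)

/-- The rooted tree `RT(a₀, …, a_{n-1})` is super edge-graceful: there is an edge
labeling which is a bijection onto `{0, ±1, …, ±(q-1)/2}` (`q` odd) resp.
`{±1, …, ±(q/2)}` (`q` even) whose induced vertex labeling is a bijection onto
`{0, ±1, …, ±(p-1)/2}` (`p` odd) resp. `{±1, …, ±(p/2)}` (`p` even), where
`q = n + ∑ i, a i` and `p = q + 1`. -/
def IsSEG {n : ℕ} (a : Fin n → ℕ) : Prop :=
  ∃ f : RTEdge n a → ℤ,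
    Set.BijOn f Set.univ ↑(segSet (n + ∑ i, a i)) ∧
    Set.BijOn (vertexSum a f) Set.univ ↑(segSet (n + ∑ i, a i + 1))

/-- The sequence `(0^j, a, b)` of length `j + 2`. -/
def seq2 (j a b : ℕ) : Fin (j + 2) → ℕ :=
  fun i => if (i : ℕ) < j then 0 else if (i : ℕ) = j then a else b

-- ## auxiliary development

lemma segSet_odd (q : ℕ) (k : ℤ) (h : (q:ℤ) = 2*k+1) :
    segSet q = Finset.Icc (-k) k := by
  have h1 : q % 2 = 1 := by omega
  have h2 : ((q / 2 : ℕ) : ℤ) = k := by omega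
  rw [segSet, if_neg (by omega), h2]

lemma segSet_even (q : ℕ) (k : ℤ) (h : (q:ℤ) = 2*k+2) :
    segSet q = (Finset.Icc (-(k+1)) (k+1)).erase 0 := by
  have h1 : q % 2 = 0 := by omega
  have h2 : ((q / 2 : ℕ) : ℤ) = k+1 := by omega
  rw [segSet, if_pos h1, h2]

lemma sum_Icc_neg (k : ℤ) : (Finset.Icc (-k) k).sum id = 0 := by
  have himg : Finset.Icc (-k) k = (Finset.Icc (-k) k).image (fun x => -x) := by
    ext z; simp only [Finset.mem_image, Finset.mem_Icc]
    constructor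
    · intro h; exact ⟨-z, ⟨by omega, by omega⟩, by omega⟩
    · rintro ⟨y, hy, rfl⟩; omega
  have h2 : (Finset.Icc (-k) k).sum id = ((Finset.Icc (-k) k).image (fun x => -x)).sum id := by
    rw [← himg]
  rw [Finset.sum_image (by intro x _ y _ h; simp only [neg_inj] at h; omega)] at h2
  simp only [id] at h2 ⊢
  rw [Finset.sum_neg_distrib] at h2
  omega

lemma segSet_sum (q : ℕ) (k : ℤ) (h : (q:ℤ) = 2*k+1) : (segSet q).sum id = 0 := by
  rw [segSet_odd q k h]; exact sum_Icc_neg k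

lemma segSet_card (q : ℕ) : (segSet q).card = q := by
  have h0 : (0:ℤ) ∈ Finset.Icc (-((q/2:ℕ):ℤ)) ((q/2:ℕ):ℤ) := by simp [Finset.mem_Icc]; omega
  rcases Nat.even_or_odd q with he | ho
  · have h1 : q % 2 = 0 := Nat.even_iff.mp he
    rw [segSet, if_pos h1, Finset.card_erase_of_mem h0, Int.card_Icc]
    omega
  · have h1 : q % 2 = 1 := Nat.odd_iff.mp ho
    rw [segSet, if_neg (by omega), Int.card_Icc]
    omega


/-- symmetric block {l..r} ∪ {-r..-l} -/
noncomputable def SymB (l r : ℤ) : Finset ℤ := Finset.Icc l r ∪ Finset.Icc (-r) (-l)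

lemma mem_SymB {l r z : ℤ} :
    z ∈ SymB l r ↔ (l ≤ z ∧ z ≤ r) ∨ (-r ≤ z ∧ z ≤ -l) := by
  simp [SymB, Finset.mem_union, Finset.mem_Icc]

lemma card_SymB (l r : ℤ) (h0 : 1 ≤ l) : (SymB l r).card = 2 * (r + 1 - l).toNat := by
  rw [SymB, Finset.card_union_of_disjoint, Int.card_Icc, Int.card_Icc]
  · omega
  · rw [Finset.disjoint_left]
    intro z hz hz'
    simp only [Finset.mem_Icc] at hz hz'
    omega

lemma sum_SymB (l r : ℤ) (h0 : 1 ≤ l) : (SymB l r).sum id = 0 := by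
  have himg : Finset.Icc (-r) (-l) = (Finset.Icc l r).image (fun x => -x) := by
    ext z; simp only [Finset.mem_image, Finset.mem_Icc]
    constructor
    · intro h; exact ⟨-z, ⟨by omega, by omega⟩, by omega⟩
    · rintro ⟨y, hy, rfl⟩; omega
  rw [SymB, Finset.sum_union, himg, Finset.sum_image (by intro x _ y _ h; simp only [neg_inj] at h; omega)]
  · simp only [id]
    rw [Finset.sum_neg_distrib]
    ring
  · rw [Finset.disjoint_left]
    intro z hz hz'
    simp only [Finset.mem_Icc] at hz hz'
    omega

/-- enumeration of a finset of known cardinality -/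
lemma enum_exists (s : Finset ℤ) (n : ℕ) (h : s.card = n) :
    ∃ g : Fin n → ℤ, Function.Injective g ∧ (∀ i, g i ∈ s) ∧ (∀ z ∈ s, ∃ i, g i = z) ∧
      ∑ i, g i = s.sum id := by
  subst h
  refine ⟨fun i => (s.equivFin.symm i : ℤ), ?_, fun i => (s.equivFin.symm i).2, ?_, ?_⟩
  · intro i i' hii
    have := Subtype.coe_injective hii
    exact s.equivFin.symm.injective this
  · intro z hz
    exact ⟨s.equivFin ⟨z, hz⟩, by simp⟩
  · rw [← Finset.sum_coe_sort s id]
    exact Equiv.sum_comp s.equivFin.symm (fun x => (x : ℤ))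

def Spec (j a b : ℕ) : Prop :=
  ∃ c d : ℤ, ∃ Sa Tb : Finset ℤ,
    Sa.card = a ∧ Tb.card = b ∧
    (insert c (insert d (Sa ∪ Tb)) : Finset ℤ).card = 2 + a + b ∧
    insert c (insert d (Sa ∪ Tb)) ⊆ segSet (j + 2 + a + b) ∧
    ({c + Sa.sum id, d + Tb.sum id, -(Sa.sum id + Tb.sum id)} : Finset ℤ).card = 3 ∧
    Disjoint ({c + Sa.sum id, d + Tb.sum id, -(Sa.sum id + Tb.sum id)} : Finset ℤ)
      (segSet (j + 2 + a + b) \ {c, d}) ∧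
    (segSet (j + 2 + a + b) \ {c, d}) ∪
        {c + Sa.sum id, d + Tb.sum id, -(Sa.sum id + Tb.sum id)} =
      segSet (j + 2 + a + b + 1)

/-- distinctness from the insert-card condition -/
lemma card_insert_helper {c d : ℤ} {Sa Tb : Finset ℤ}
    (h : (insert c (insert d (Sa ∪ Tb)) : Finset ℤ).card = 2 + Sa.card + Tb.card) :
    c ∉ insert d (Sa ∪ Tb) ∧ d ∉ Sa ∪ Tb ∧ Disjoint Sa Tb := by
  have h1 := Finset.card_insert_le c (insert d (Sa ∪ Tb))
  have h2 := Finset.card_insert_le d (Sa ∪ Tb)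
  have h3 := Finset.card_union_le Sa Tb
  by_cases hc : c ∈ insert d (Sa ∪ Tb)
  · rw [Finset.card_insert_of_mem hc] at h; omega
  rw [Finset.card_insert_of_notMem hc] at h
  by_cases hd : d ∈ Sa ∪ Tb
  · rw [Finset.card_insert_of_mem hd] at h; omega
  rw [Finset.card_insert_of_notMem hd] at h
  refine ⟨hc, hd, ?_⟩
  rw [Finset.disjoint_left]
  intro z hz hz'
  have := Finset.card_union_add_card_inter Sa Tb
  have hzi : z ∈ Sa ∩ Tb := Finset.mem_inter.mpr ⟨hz, hz'⟩
  have : 1 ≤ (Sa ∩ Tb).card := Finset.card_pos.mpr ⟨z, hzi⟩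
  omega

/-- conversely, build the insert-card condition -/
lemma card_insert_build {c d : ℤ} {Sa Tb : Finset ℤ}
    (hc : c ∉ insert d (Sa ∪ Tb)) (hd : d ∉ Sa ∪ Tb) (hST : Disjoint Sa Tb) :
    (insert c (insert d (Sa ∪ Tb)) : Finset ℤ).card = 2 + Sa.card + Tb.card := by
  rw [Finset.card_insert_of_notMem hc, Finset.card_insert_of_notMem hd,
    Finset.card_union_of_disjoint hST]
  ring

lemma sum_insert_build {c d : ℤ} {Sa Tb : Finset ℤ}
    (hc : c ∉ insert d (Sa ∪ Tb)) (hd : d ∉ Sa ∪ Tb) (hST : Disjoint Sa Tb) :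
    (insert c (insert d (Sa ∪ Tb)) : Finset ℤ).sum id = c + d + Sa.sum id + Tb.sum id := by
  rw [Finset.sum_insert hc, Finset.sum_insert hd, Finset.sum_union hST]
  simp only [id]; ring

/-- master construction lemma -/
lemma spec_of (j a b : ℕ) (k m c d : ℤ) (Sa Tb : Finset ℤ)
    (hq : (j:ℤ) + 2 + a + b = 2*k+1) (hk : 1 ≤ k)
    (hcd : (c = 0 ∧ d = m) ∨ (c = m ∧ d = 0))
    (hm : m ≠ 0) (hmk : -k ≤ m ∧ m ≤ k)
    (hSa : Sa.card = a) (hTb : Tb.card = b)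
    (hST : Disjoint Sa Tb) (hcS : c ∉ Sa ∪ Tb) (hdS : d ∉ Sa ∪ Tb)
    (hsub : ∀ z ∈ Sa ∪ Tb, (-k ≤ z ∧ z ≤ k ∧ z ≠ 0 ∧ z ≠ m))
    (hABR : ({c + Sa.sum id, d + Tb.sum id, -(Sa.sum id + Tb.sum id)} : Finset ℤ) =
      {m, k+1, -(k+1)}) : Spec j a b := by
  have hcd' : c ≠ d := by rcases hcd with ⟨rfl, rfl⟩ | ⟨rfl, rfl⟩ <;> omega
  have hq' : ((j + 2 + a + b : ℕ) : ℤ) = 2*k+1 := by push_cast; omega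
  have hq2 : ((j + 2 + a + b + 1 : ℕ) : ℤ) = 2*k+2 := by push_cast; omega
  have hseg := segSet_odd _ k hq'
  have hseg2 := segSet_even _ k hq2
  have hcmem : c ∉ insert d (Sa ∪ Tb) := by
    simp only [Finset.mem_insert]
    push_neg
    exact ⟨hcd', hcS⟩
  refine ⟨c, d, Sa, Tb, hSa, hTb, ?_, ?_, ?_, ?_, ?_⟩
  · rw [card_insert_build hcmem hdS hST, hSa, hTb]
  · intro z hz
    rw [hseg, Finset.mem_Icc]
    simp only [Finset.mem_insert] at hz
    rcases hz with rfl | rfl | hz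
    · rcases hcd with ⟨rfl, _⟩ | ⟨rfl, _⟩ <;> omega
    · rcases hcd with ⟨_, rfl⟩ | ⟨_, rfl⟩ <;> omega
    · have := hsub z hz; omega
  · rw [hABR]
    rw [Finset.card_insert_of_notMem (by simp; omega), Finset.card_insert_of_notMem (by simp; omega)]
    simp
  · rw [hABR, hseg, Finset.disjoint_left]
    intro z hz hz'
    simp only [Finset.mem_insert, Finset.mem_singleton] at hz
    simp only [Finset.mem_sdiff, Finset.mem_Icc, Finset.mem_insert, Finset.mem_singleton] at hz'
    rcases hcd with ⟨rfl, rfl⟩ | ⟨rfl, rfl⟩ <;> omega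
  · rw [hABR, hseg, hseg2]
    ext z
    simp only [Finset.mem_union, Finset.mem_sdiff, Finset.mem_Icc, Finset.mem_insert,
      Finset.mem_singleton, Finset.mem_erase]
    rcases hcd with ⟨rfl, rfl⟩ | ⟨rfl, rfl⟩ <;> omega

/-- `Spec` forces the rigid structure: one of `c,d` is `0`, and the three derived
values are `{m, k+1, -(k+1)}` where `m = c + d`. -/
lemma spec_structure (j a b : ℕ) (k : ℤ) (hq : (j:ℤ)+2+a+b = 2*k+1)
    (h : Spec j a b) :
    ∃ c d : ℤ, ∃ Sa Tb : Finset ℤ, ∃ m : ℤ,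
      Sa.card = a ∧ Tb.card = b ∧
      ((c = 0 ∧ d = m) ∨ (c = m ∧ d = 0)) ∧ m ≠ 0 ∧ -k ≤ m ∧ m ≤ k ∧
      (∀ z ∈ Sa ∪ Tb, -k ≤ z ∧ z ≤ k ∧ z ≠ 0 ∧ z ≠ m) ∧ Disjoint Sa Tb ∧
      ({c + Sa.sum id, d + Tb.sum id, -(Sa.sum id + Tb.sum id)} : Finset ℤ) =
        {m, k+1, -(k+1)} ∧
      (∃ E : Finset ℤ, E.card = j ∧ (∀ z ∈ E, -k ≤ z ∧ z ≤ k ∧ z ≠ 0 ∧ z ≠ m) ∧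
        E.sum id = -(c + d + Sa.sum id + Tb.sum id)) := by
  obtain ⟨c, d, Sa, Tb, hSa, hTb, hcard, hsub, hABR3, hdisjABR, hunion⟩ := h
  have hq' : ((j + 2 + a + b : ℕ) : ℤ) = 2*k+1 := by push_cast; omega
  have hq2 : ((j + 2 + a + b + 1 : ℕ) : ℤ) = 2*k+2 := by push_cast; omega
  have hk : 1 ≤ k := by omega
  have hseg := segSet_odd _ k hq'
  have hseg2 := segSet_even _ k hq2
  obtain ⟨hcni, hdni, hST⟩ := card_insert_helper (by rw [hcard, hSa, hTb])
  have hcd : c ≠ d := fun hh => hcni (by simp [hh])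
  -- c, d ∈ segSet
  have hcmem : c ∈ Finset.Icc (-k) k := by
    rw [← hseg]; exact hsub (by simp)
  have hdmem : d ∈ Finset.Icc (-k) k := by
    rw [← hseg]; exact hsub (by simp)
  -- 0 ∈ {c, d}
  have h0cd : c = 0 ∨ d = 0 := by
    by_contra hcon
    push_neg at hcon
    have h0 : (0:ℤ) ∈ (segSet (j+2+a+b) \ {c,d}) := by
      rw [hseg]
      simp only [Finset.mem_sdiff, Finset.mem_Icc, Finset.mem_insert, Finset.mem_singleton]
      refine ⟨by omega, ?_⟩
      push_neg
      exact ⟨fun hh => hcon.1 hh.symm, fun hh => hcon.2 hh.symm⟩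
    have h0' : (0:ℤ) ∈ segSet (j+2+a+b+1) := by
      rw [← hunion]; exact Finset.mem_union_left _ h0
    rw [hseg2] at h0'
    simp at h0'
  set m : ℤ := c + d with hmdef
  have hcdm : (c = 0 ∧ d = m) ∨ (c = m ∧ d = 0) := by
    rcases h0cd with rfl | rfl
    · left; constructor <;> omega
    · right; constructor <;> omega
  have hm0 : m ≠ 0 := by
    rcases hcdm with ⟨h1, h2⟩ | ⟨h1, h2⟩ <;> omega
  have hmk : -k ≤ m ∧ m ≤ k := by
    simp only [Finset.mem_Icc] at hcmem hdmem
    rcases hcdm with ⟨h1, h2⟩ | ⟨h1, h2⟩ <;> omega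
  -- membership facts for Sa ∪ Tb
  have hsub' : ∀ z ∈ Sa ∪ Tb, -k ≤ z ∧ z ≤ k ∧ z ≠ 0 ∧ z ≠ m := by
    intro z hz
    have hz1 : z ∈ Finset.Icc (-k) k := by
      rw [← hseg]; exact hsub (by simp [hz])
    have hzc : z ≠ c := fun hh => hcni (by simp [← hh, hz])
    have hzd : z ≠ d := fun hh => hdni (hh ▸ hz)
    simp only [Finset.mem_Icc] at hz1
    rcases hcdm with ⟨h1, h2⟩ | ⟨h1, h2⟩ <;>
      exact ⟨hz1.1, hz1.2, by omega, by omega⟩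
  -- the ABR set equality
  have hmem3 : ({m, k+1, -(k+1)} : Finset ℤ) ⊆
      {c + Sa.sum id, d + Tb.sum id, -(Sa.sum id + Tb.sum id)} := by
    intro z hz
    simp only [Finset.mem_insert, Finset.mem_singleton] at hz
    have hz2 : z ∈ segSet (j+2+a+b+1) := by
      rw [hseg2]
      simp only [Finset.mem_erase, Finset.mem_Icc]
      rcases hz with rfl | rfl | rfl <;> refine ⟨by omega, by omega, by omega⟩
    rw [← hunion] at hz2
    rcases Finset.mem_union.mp hz2 with hz3 | hz3
    · exfalso
      rw [hseg] at hz3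
      simp only [Finset.mem_sdiff, Finset.mem_Icc, Finset.mem_insert,
        Finset.mem_singleton] at hz3
      rcases hcdm with ⟨h1, h2⟩ | ⟨h1, h2⟩ <;> rcases hz with rfl | rfl | rfl <;> omega
    · exact hz3
  have hcard3 : ({m, k+1, -(k+1)} : Finset ℤ).card = 3 := by
    rw [Finset.card_insert_of_notMem (by simp; omega),
      Finset.card_insert_of_notMem (by simp; omega)]
    simp
  have hABR : ({c + Sa.sum id, d + Tb.sum id, -(Sa.sum id + Tb.sum id)} : Finset ℤ) =
      {m, k+1, -(k+1)} :=
    (Finset.eq_of_subset_of_card_le hmem3 (by omega)).symm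
  -- the complement E
  refine ⟨c, d, Sa, Tb, m, hSa, hTb, hcdm, hm0, hmk.1, hmk.2, hsub', hST, hABR, ?_⟩
  refine ⟨segSet (j+2+a+b) \ insert c (insert d (Sa ∪ Tb)), ?_, ?_, ?_⟩
  · rw [Finset.card_sdiff_of_subset hsub, segSet_card, hcard]
    omega
  · intro z hz
    simp only [Finset.mem_sdiff, Finset.mem_insert, Finset.mem_union] at hz
    obtain ⟨hz1, hz2⟩ := hz
    push_neg at hz2
    rw [hseg, Finset.mem_Icc] at hz1
    rcases hcdm with ⟨h1, h2⟩ | ⟨h1, h2⟩ <;>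
      exact ⟨hz1.1, hz1.2, by omega, by omega⟩
  · rw [Finset.sum_sdiff_eq_sub hsub, segSet_sum _ k hq', sum_insert_build hcni hdni hST]
    ring

lemma not_spec_a1b1 (j : ℕ) (k : ℤ) (hq : (j:ℤ)+2+1+1 = 2*k+1) : ¬ Spec j 1 1 := by
  intro h
  obtain ⟨c, d, Sa, Tb, m, hSa, hTb, hcdm, hm0, hmk1, hmk2, hsub, hST, hABR, -⟩ :=
    spec_structure j 1 1 k hq h
  obtain ⟨x, rfl⟩ := Finset.card_eq_one.mp hSa
  obtain ⟨y, rfl⟩ := Finset.card_eq_one.mp hTb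
  have hx := hsub x (by simp)
  have hy := hsub y (by simp)
  simp only [Finset.sum_singleton, id] at hABR
  have hA : c + x ∈ ({m, k+1, -(k+1)} : Finset ℤ) := by
    rw [← hABR]; exact Finset.mem_insert_self _ _
  have hB : d + y ∈ ({m, k+1, -(k+1)} : Finset ℤ) := by
    rw [← hABR]
    exact Finset.mem_insert_of_mem (Finset.mem_insert_self _ _)
  simp only [Finset.mem_insert, Finset.mem_singleton] at hA hB
  rcases hcdm with ⟨hc, hd⟩ | ⟨hc, hd⟩ <;> omega

lemma not_spec_a1j1 (b : ℕ) (k : ℤ) (hq : (1:ℤ)+2+1+b = 2*k+1) : ¬ Spec 1 1 b := by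
  intro h
  obtain ⟨c, d, Sa, Tb, m, hSa, hTb, hcdm, hm0, hmk1, hmk2, hsub, hST, hABR, E, hE, hEsub, hEsum⟩ :=
    spec_structure 1 1 b k hq h
  obtain ⟨x, rfl⟩ := Finset.card_eq_one.mp hSa
  obtain ⟨e, rfl⟩ := Finset.card_eq_one.mp hE
  have hx := hsub x (by simp)
  have he := hEsub e (by simp)
  simp only [Finset.sum_singleton, id] at hABR hEsum
  have hA : c + x ∈ ({m, k+1, -(k+1)} : Finset ℤ) := by
    rw [← hABR]; exact Finset.mem_insert_self _ _
  have hB : d + (∑ x ∈ Tb, x) ∈ ({m, k+1, -(k+1)} : Finset ℤ) := by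
    rw [← hABR]
    exact Finset.mem_insert_of_mem (Finset.mem_insert_self _ _)
  have hR : -(x + (∑ x ∈ Tb, x)) ∈ ({m, k+1, -(k+1)} : Finset ℤ) := by
    rw [← hABR]
    exact Finset.mem_insert_of_mem (Finset.mem_insert_of_mem (Finset.mem_singleton_self _))
  simp only [Finset.mem_insert, Finset.mem_singleton] at hA hB hR
  rcases hcdm with ⟨hc, hd⟩ | ⟨hc, hd⟩ <;> omega

-- ### bridge definitions

def jF (j : ℕ) : Fin (j+2) := ⟨j, by omega⟩
def j1F (j : ℕ) : Fin (j+2) := ⟨j+1, by omega⟩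

@[simp] lemma jF_val (j : ℕ) : ((jF j : Fin (j+2)) : ℕ) = j := rfl
@[simp] lemma j1F_val (j : ℕ) : ((j1F j : Fin (j+2)) : ℕ) = j+1 := rfl

lemma seq2_at_jF (j a b : ℕ) : seq2 j a b (jF j) = a := by simp [seq2]

lemma seq2_at_j1F (j a b : ℕ) : seq2 j a b (j1F j) = b := by simp [seq2]

lemma seq2_at_lt (j a b : ℕ) (i : Fin (j+2)) (h : (i:ℕ) < j) : seq2 j a b i = 0 := by
  simp [seq2, h]

lemma fcast_cast {n m : ℕ} (h : n = m) (x : Fin n) : Fin.cast h.symm (Fin.cast h x) = x := by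
  subst h; rfl

lemma seq2_sum (j a b : ℕ) : ∑ i, seq2 j a b i = a + b := by
  rw [Fin.sum_univ_castSucc, Fin.sum_univ_castSucc]
  have h1 : ∀ i : Fin j, seq2 j a b (i.castSucc.castSucc) = 0 :=
    fun i => seq2_at_lt _ _ _ _ (by simp)
  have h2 : (Fin.last j).castSucc = jF j := by ext; simp [jF]
  have h3 : Fin.last (j+1) = j1F j := by ext; simp [j1F]
  rw [Finset.sum_eq_zero (fun i _ => h1 i), h2, h3, seq2_at_jF, seq2_at_j1F]
  omega

lemma card_edge (j a b : ℕ) :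
    Fintype.card (RTEdge (j+2) (seq2 j a b)) = j + 2 + a + b := by
  have h := seq2_sum j a b
  simp only [RTEdge, Fintype.card_sum, Fintype.card_sigma, Fintype.card_fin]
  rw [h]; omega

lemma card_vertex (j a b : ℕ) :
    Fintype.card (RTVertex (j+2) (seq2 j a b)) = j + 2 + a + b + 1 := by
  have h : Fintype.card (RTVertex (j+2) (seq2 j a b)) =
      Fintype.card (RTEdge (j+2) (seq2 j a b)) + 1 := Fintype.card_option
  rw [h, card_edge]

def mkf (j a b : ℕ) (c d : ℤ) (eE : Fin j → ℤ) (eS : Fin a → ℤ) (eT : Fin b → ℤ) :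
    RTEdge (j+2) (seq2 j a b) → ℤ
  | .inl i => if h : (i:ℕ) < j then eE ⟨i, h⟩ else if (i:ℕ) = j then c else d
  | .inr x =>
      if h : (x.1:ℕ) = j then
        eS (Fin.cast (show seq2 j a b x.1 = a by simp [seq2, h]) x.2)
      else if h' : (x.1:ℕ) = j+1 then
        eT (Fin.cast (show seq2 j a b x.1 = b by
          simp only [seq2, h']
          rw [if_neg (by omega), if_neg (by omega)]) x.2)
      else 0

variable {j a b : ℕ} {c d : ℤ} {eE : Fin j → ℤ} {eS : Fin a → ℤ} {eT : Fin b → ℤ}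

lemma mkf_lt (i : Fin (j+2)) (h : (i:ℕ) < j) :
    mkf j a b c d eE eS eT (.inl i) = eE ⟨i, h⟩ := by simp [mkf, h]

lemma mkf_c : mkf j a b c d eE eS eT (.inl (jF j)) = c := by simp [mkf]

lemma mkf_d : mkf j a b c d eE eS eT (.inl (j1F j)) = d := by simp [mkf]

lemma mkf_S (mm : Fin (seq2 j a b (jF j))) :
    mkf j a b c d eE eS eT (.inr ⟨jF j, mm⟩) = eS (Fin.cast (seq2_at_jF j a b) mm) := by
  simp [mkf]

lemma mkf_T (mm : Fin (seq2 j a b (j1F j))) :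
    mkf j a b c d eE eS eT (.inr ⟨j1F j, mm⟩) = eT (Fin.cast (seq2_at_j1F j a b) mm) := by
  simp [mkf]

lemma edge_cases (x : RTEdge (j+2) (seq2 j a b)) :
    (∃ i : Fin (j+2), ((i:ℕ) < j) ∧ x = .inl i) ∨ x = .inl (jF j) ∨ x = .inl (j1F j) ∨
    (∃ mm, x = .inr ⟨jF j, mm⟩) ∨ (∃ mm, x = .inr ⟨j1F j, mm⟩) := by
  rcases x with i | ⟨i, mm⟩
  · by_cases h : (i:ℕ) < j
    · exact Or.inl ⟨i, h, rfl⟩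
    · by_cases h' : (i:ℕ) = j
      · have : i = jF j := Fin.ext (by simpa using h')
        subst this; exact Or.inr (Or.inl rfl)
      · have : i = j1F j := Fin.ext (by have := i.isLt; simp; omega)
        subst this; exact Or.inr (Or.inr (Or.inl rfl))
  · by_cases h : (i:ℕ) < j
    · exfalso
      have h0 := seq2_at_lt j a b i h
      have := mm.isLt
      omega
    · by_cases h' : (i:ℕ) = j
      · have : i = jF j := Fin.ext (by simpa using h')
        subst this
        exact Or.inr (Or.inr (Or.inr (Or.inl ⟨mm, rfl⟩)))
      · have : i = j1F j := Fin.ext (by have := i.isLt; simp; omega)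
        subst this
        exact Or.inr (Or.inr (Or.inr (Or.inr ⟨mm, rfl⟩)))

lemma vertex_cases (v : RTVertex (j+2) (seq2 j a b)) :
    v = none ∨ (∃ i : Fin (j+2), ((i:ℕ) < j) ∧ v = some (.inl i)) ∨
    v = some (.inl (jF j)) ∨ v = some (.inl (j1F j)) ∨
    (∃ mm, v = some (.inr ⟨jF j, mm⟩)) ∨ (∃ mm, v = some (.inr ⟨j1F j, mm⟩)) := by
  rcases v with _ | x
  · exact Or.inl rfl
  · rcases edge_cases x with ⟨i, h, rfl⟩ | rfl | rfl | ⟨mm, rfl⟩ | ⟨mm, rfl⟩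
    · exact Or.inr (Or.inl ⟨i, h, rfl⟩)
    · exact Or.inr (Or.inr (Or.inl rfl))
    · exact Or.inr (Or.inr (Or.inr (Or.inl rfl)))
    · exact Or.inr (Or.inr (Or.inr (Or.inr (Or.inl ⟨mm, rfl⟩))))
    · exact Or.inr (Or.inr (Or.inr (Or.inr (Or.inr ⟨mm, rfl⟩))))

/-- vertexSum at a small child (empty fiber), for arbitrary `f` -/
lemma vs_lt (f : RTEdge (j+2) (seq2 j a b) → ℤ) (i : Fin (j+2)) (h : (i:ℕ) < j) :
    vertexSum (seq2 j a b) f (some (.inl i)) = f (.inl i) := by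
  have h0 := seq2_at_lt j a b i h
  show f (.inl i) + ∑ mm : Fin (seq2 j a b i), f (.inr ⟨i, mm⟩) = f (.inl i)
  rw [Finset.sum_eq_zero (fun mm _ => absurd mm.isLt (by omega))]
  ring

/-- vertexSum at child `jF`, reindexed, for arbitrary `f` -/
lemma vs_A (f : RTEdge (j+2) (seq2 j a b) → ℤ) :
    vertexSum (seq2 j a b) f (some (.inl (jF j))) =
      f (.inl (jF j)) +
        ∑ i : Fin a, f (.inr ⟨jF j, Fin.cast (seq2_at_jF j a b).symm i⟩) := by
  show f (.inl (jF j)) + ∑ mm : Fin (seq2 j a b (jF j)), f (.inr ⟨jF j, mm⟩) = _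
  congr 1
  exact (Fintype.sum_equiv (finCongr (seq2_at_jF j a b).symm)
    (fun i => f (.inr ⟨jF j, Fin.cast (seq2_at_jF j a b).symm i⟩))
    (fun mm => f (.inr ⟨jF j, mm⟩))
    (fun i => rfl)).symm

lemma vs_B (f : RTEdge (j+2) (seq2 j a b) → ℤ) :
    vertexSum (seq2 j a b) f (some (.inl (j1F j))) =
      f (.inl (j1F j)) +
        ∑ i : Fin b, f (.inr ⟨j1F j, Fin.cast (seq2_at_j1F j a b).symm i⟩) := by
  show f (.inl (j1F j)) + ∑ mm : Fin (seq2 j a b (j1F j)), f (.inr ⟨j1F j, mm⟩) = _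
  congr 1
  exact (Fintype.sum_equiv (finCongr (seq2_at_j1F j a b).symm)
    (fun i => f (.inr ⟨j1F j, Fin.cast (seq2_at_j1F j a b).symm i⟩))
    (fun mm => f (.inr ⟨j1F j, mm⟩))
    (fun i => rfl)).symm

/-- total sum of `f` over all edges -/
lemma edge_total (f : RTEdge (j+2) (seq2 j a b) → ℤ) :
    ∑ x : RTEdge (j+2) (seq2 j a b), f x =
      (∑ i : Fin (j+2), f (.inl i)) +
        ((∑ i : Fin a, f (.inr ⟨jF j, Fin.cast (seq2_at_jF j a b).symm i⟩)) +
         (∑ i : Fin b, f (.inr ⟨j1F j, Fin.cast (seq2_at_j1F j a b).symm i⟩))) := by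
  rw [Fintype.sum_sum_type]
  congr 1
  have hsig : ∑ x : Σ i : Fin (j+2), Fin (seq2 j a b i), f (.inr x) =
      ∑ i : Fin (j+2), ∑ mm : Fin (seq2 j a b i), f (.inr ⟨i, mm⟩) := by
    rw [← Finset.univ_sigma_univ, Finset.sum_sigma]
  rw [hsig, Fin.sum_univ_castSucc, Fin.sum_univ_castSucc]
  have h1 : ∀ i : Fin j,
      (∑ mm : Fin (seq2 j a b (i.castSucc.castSucc)), f (.inr ⟨i.castSucc.castSucc, mm⟩)) = 0 := by
    intro i
    have h0 := seq2_at_lt j a b (i.castSucc.castSucc) (by simp)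
    exact Finset.sum_eq_zero (fun mm _ => absurd mm.isLt (by omega))
  have h2 : (Fin.last j).castSucc = jF j := by ext; simp [jF]
  have h3 : Fin.last (j+1) = j1F j := by ext; simp [j1F]
  rw [Finset.sum_eq_zero (fun i _ => h1 i)]
  rw [h2, h3, zero_add]
  congr 1
  · exact (Fintype.sum_equiv (finCongr (seq2_at_jF j a b).symm)
      (fun i => f (.inr ⟨jF j, Fin.cast (seq2_at_jF j a b).symm i⟩))
      (fun mm => f (.inr ⟨jF j, mm⟩)) (fun i => rfl)).symm
  · exact (Fintype.sum_equiv (finCongr (seq2_at_j1F j a b).symm)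
      (fun i => f (.inr ⟨j1F j, Fin.cast (seq2_at_j1F j a b).symm i⟩))
      (fun mm => f (.inr ⟨j1F j, mm⟩)) (fun i => rfl)).symm

lemma spec_of_isSEG (j a b : ℕ) (k : ℤ) (hq : (j:ℤ)+2+a+b = 2*k+1) :
    IsSEG (seq2 j a b) → Spec j a b := by
  rintro ⟨f, hf1, hf2⟩
  have hidx : j + 2 + ∑ i, seq2 j a b i = j + 2 + a + b := by rw [seq2_sum]; omega
  rw [hidx] at hf1 hf2
  set q := j + 2 + a + b with hqdef
  have hq' : ((q:ℕ):ℤ) = 2*k+1 := by push_cast [hqdef]; omega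
  -- basic facts about f
  have hinj : Function.Injective f := fun x y h => hf1.2.1 trivial trivial h
  have hmapsf : ∀ x, f x ∈ segSet q := fun x => hf1.1 (Set.mem_univ x)
  have hsurjf : ∀ z ∈ segSet q, ∃ x, f x = z := by
    intro z hz
    obtain ⟨x, -, hx⟩ := hf1.2.2 hz
    exact ⟨x, hx⟩
  have hvinj : Function.Injective (vertexSum (seq2 j a b) f) :=
    fun x y h => hf2.2.1 trivial trivial h
  have hvmaps : ∀ v, vertexSum (seq2 j a b) f v ∈ segSet (q+1) :=
    fun v => hf2.1 (Set.mem_univ v)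
  have hvsurj : ∀ z ∈ segSet (q+1), ∃ v, vertexSum (seq2 j a b) f v = z := by
    intro z hz
    obtain ⟨v, -, hv⟩ := hf2.2.2 hz
    exact ⟨v, hv⟩
  set c := f (.inl (jF j)) with hcdef
  set d := f (.inl (j1F j)) with hddef
  set gS : Fin a → ℤ := fun i => f (.inr ⟨jF j, Fin.cast (seq2_at_jF j a b).symm i⟩) with hgSdef
  set gT : Fin b → ℤ := fun i => f (.inr ⟨j1F j, Fin.cast (seq2_at_j1F j a b).symm i⟩) with hgTdef
  have hgSinj : Function.Injective gS := by
    intro i i' h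
    injection (hinj h) with h2
    have h3 := congrArg (fun s : Σ i : Fin (j+2), Fin (seq2 j a b i) => ((s.2 : ℕ))) h2
    simpa [Fin.ext_iff, Fin.coe_cast] using h3
  have hgTinj : Function.Injective gT := by
    intro i i' h
    injection (hinj h) with h2
    have h3 := congrArg (fun s : Σ i : Fin (j+2), Fin (seq2 j a b i) => ((s.2 : ℕ))) h2
    simpa [Fin.ext_iff, Fin.coe_cast] using h3
  set Sa : Finset ℤ := Finset.image gS Finset.univ with hSadef
  set Tb : Finset ℤ := Finset.image gT Finset.univ with hTbdef
  have hSacard : Sa.card = a := by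
    rw [hSadef, Finset.card_image_of_injective _ hgSinj]; simp
  have hTbcard : Tb.card = b := by
    rw [hTbdef, Finset.card_image_of_injective _ hgTinj]; simp
  have hSasum : Sa.sum id = ∑ i : Fin a, gS i := by
    rw [hSadef, Finset.sum_image (fun x _ y _ h => hgSinj h)]
    simp
  have hTbsum : Tb.sum id = ∑ i : Fin b, gT i := by
    rw [hTbdef, Finset.sum_image (fun x _ y _ h => hgTinj h)]
    simp
  -- values of vertexSum at internal vertices
  have hA : vertexSum (seq2 j a b) f (some (.inl (jF j))) = c + Sa.sum id := by
    rw [vs_A, hSasum, hcdef]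
  have hB : vertexSum (seq2 j a b) f (some (.inl (j1F j))) = d + Tb.sum id := by
    rw [vs_B, hTbsum, hddef]
  have htot : ∑ x : RTEdge (j+2) (seq2 j a b), f x = 0 := by
    have hbij : ∑ x ∈ (Finset.univ : Finset (RTEdge (j+2) (seq2 j a b))), f x =
        (segSet q).sum id := by
      apply Finset.sum_bij (i := fun x _ => f x)
      · intro x _; exact hmapsf x
      · intro x _ y _ h; exact hinj h
      · intro z hz
        obtain ⟨x, hx⟩ := hsurjf z hz
        exact ⟨x, Finset.mem_univ x, hx⟩
      · intro x _; rfl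
    rw [hbij, segSet_sum q k hq']
  have hR : vertexSum (seq2 j a b) f none = -(Sa.sum id + Tb.sum id) := by
    have h1 : vertexSum (seq2 j a b) f none = ∑ i : Fin (j+2), f (.inl i) := rfl
    have h2 := edge_total f
    rw [htot] at h2
    rw [h1, hSasum, hTbsum]
    simp only [hgSdef, hgTdef]
    omega
  -- distinctness of edges / values
  have hcd : c ≠ d := by
    intro h
    have := hinj h
    simp [jF, j1F, Fin.ext_iff] at this
  have hcS : c ∉ Sa ∪ Tb := by
    intro h
    rcases Finset.mem_union.mp h with h' | h' <;>
    · obtain ⟨i, -, hi⟩ := Finset.mem_image.mp h'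
      exact Sum.inr_ne_inl (hinj hi)
  have hdS : d ∉ Sa ∪ Tb := by
    intro h
    rcases Finset.mem_union.mp h with h' | h' <;>
    · obtain ⟨i, -, hi⟩ := Finset.mem_image.mp h'
      exact Sum.inr_ne_inl (hinj hi)
  have hST : Disjoint Sa Tb := by
    rw [Finset.disjoint_left]
    intro z hz hz'
    obtain ⟨i, -, hi⟩ := Finset.mem_image.mp hz
    obtain ⟨i', -, hi'⟩ := Finset.mem_image.mp hz'
    have := hinj (hi.trans hi'.symm)
    simp [jF, j1F, Fin.ext_iff] at this
  have hcni : c ∉ insert d (Sa ∪ Tb) := by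
    simp only [Finset.mem_insert]
    push_neg
    exact ⟨hcd, hcS⟩
  -- every element of segSet q off {c,d} is a leaf label
  have hleaf : ∀ z, z ∈ segSet q → z ≠ c → z ≠ d →
      ∃ v, (v ≠ none ∧ v ≠ some (.inl (jF j)) ∧ v ≠ some (.inl (j1F j))) ∧
        vertexSum (seq2 j a b) f v = z := by
    intro z hz hzc hzd
    obtain ⟨x, hx⟩ := hsurjf z hz
    rcases edge_cases x with ⟨i, h, rfl⟩ | rfl | rfl | ⟨mm, rfl⟩ | ⟨mm, rfl⟩
    · refine ⟨some (.inl i), ⟨by simp, ?_, ?_⟩, by rw [vs_lt f i h]; exact hx⟩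
      · intro hh
        injection hh with hh2
        injection hh2 with hh3
        rw [hh3] at h
        simp [jF] at h
      · intro hh
        injection hh with hh2
        injection hh2 with hh3
        rw [hh3] at h
        simp [j1F] at h
    · exact absurd hx.symm hzc
    · exact absurd hx.symm hzd
    · exact ⟨some (.inr ⟨jF j, mm⟩), ⟨by simp, by simp, by simp [jF, j1F, Fin.ext_iff]⟩, hx⟩
    · exact ⟨some (.inr ⟨j1F j, mm⟩), ⟨by simp, by simp, by simp [jF, j1F, Fin.ext_iff]⟩, hx⟩
  refine ⟨c, d, Sa, Tb, hSacard, hTbcard, ?_, ?_, ?_, ?_, ?_⟩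
  · rw [Finset.card_insert_of_notMem hcni, Finset.card_insert_of_notMem hdS,
      Finset.card_union_of_disjoint hST, hSacard, hTbcard]
    omega
  · intro z hz
    simp only [Finset.mem_insert, Finset.mem_union] at hz
    rcases hz with rfl | rfl | hz | hz
    · exact hmapsf _
    · exact hmapsf _
    · obtain ⟨i, -, hi⟩ := Finset.mem_image.mp hz
      rw [← hi]; exact hmapsf _
    · obtain ⟨i, -, hi⟩ := Finset.mem_image.mp hz
      rw [← hi]; exact hmapsf _
  · -- card of {A, B, R} is 3
    rw [← hA, ← hB, ← hR]
    have h1 : vertexSum (seq2 j a b) f (some (.inl (jF j))) ≠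
        vertexSum (seq2 j a b) f (some (.inl (j1F j))) := by
      intro h
      have := hvinj h
      simp [jF, j1F, Fin.ext_iff] at this
    have h2 : vertexSum (seq2 j a b) f (some (.inl (jF j))) ≠
        vertexSum (seq2 j a b) f none := by
      intro h; have := hvinj h; simp at this
    have h3 : vertexSum (seq2 j a b) f (some (.inl (j1F j))) ≠
        vertexSum (seq2 j a b) f none := by
      intro h; have := hvinj h; simp at this
    rw [Finset.card_insert_of_notMem (by simp [h1, h2]),
      Finset.card_insert_of_notMem (by simp [h3])]
    simp
  · -- disjointness
    rw [Finset.disjoint_left]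
    intro z hz hz'
    simp only [Finset.mem_sdiff, Finset.mem_insert, Finset.mem_singleton] at hz'
    obtain ⟨hz1, hz2⟩ := hz'
    push_neg at hz2
    obtain ⟨v, ⟨hv1, hv2, hv3⟩, hv⟩ := hleaf z hz1 hz2.1 hz2.2
    simp only [Finset.mem_insert, Finset.mem_singleton] at hz
    rcases hz with rfl | rfl | rfl
    · exact hv2 (hvinj (hv.trans hA.symm))
    · exact hv3 (hvinj (hv.trans hB.symm))
    · exact hv1 (hvinj (hv.trans hR.symm))
  · -- the union equality
    ext z
    simp only [Finset.mem_union, Finset.mem_sdiff, Finset.mem_insert, Finset.mem_singleton]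
    constructor
    · rintro (⟨hz1, hz2⟩ | hz)
      · push_neg at hz2
        obtain ⟨v, -, hv⟩ := hleaf z hz1 hz2.1 hz2.2
        rw [← hv]; exact hvmaps v
      · rcases hz with rfl | rfl | rfl
        · rw [← hA]; exact hvmaps _
        · rw [← hB]; exact hvmaps _
        · rw [← hR]; exact hvmaps _
    · intro hz
      obtain ⟨v, hv⟩ := hvsurj z hz
      rcases vertex_cases v with rfl | ⟨i, h, rfl⟩ | rfl | rfl | ⟨mm, rfl⟩ | ⟨mm, rfl⟩
      · right; right; right
        rw [← hv, hR]
      · left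
        rw [vs_lt f i h] at hv
        refine ⟨by rw [← hv]; exact hmapsf _, ?_⟩
        rintro (rfl | rfl)
        · have h2 : (Sum.inl i : RTEdge (j+2) (seq2 j a b)) = Sum.inl (jF j) := hinj hv
          simp only [Sum.inl.injEq] at h2
          rw [h2] at h
          simp [jF] at h
        · have h2 : (Sum.inl i : RTEdge (j+2) (seq2 j a b)) = Sum.inl (j1F j) := hinj hv
          simp only [Sum.inl.injEq] at h2
          rw [h2] at h
          simp [j1F] at h
      · right; left; rw [← hv, hA]
      · right; right; left; rw [← hv, hB]
      · left
        have hv' : f (.inr ⟨jF j, mm⟩) = z := hv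
        refine ⟨by rw [← hv']; exact hmapsf _, ?_⟩
        rintro (rfl | rfl)
        · exact Sum.inr_ne_inl (hinj hv')
        · exact Sum.inr_ne_inl (hinj hv')
      · left
        have hv' : f (.inr ⟨j1F j, mm⟩) = z := hv
        refine ⟨by rw [← hv']; exact hmapsf _, ?_⟩
        rintro (rfl | rfl)
        · exact Sum.inr_ne_inl (hinj hv')
        · exact Sum.inr_ne_inl (hinj hv')

lemma isSEG_of_spec (j a b : ℕ) (k : ℤ) (hq : (j:ℤ)+2+a+b = 2*k+1) :
    Spec j a b → IsSEG (seq2 j a b) := by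
  rintro ⟨c, d, Sa, Tb, hSa, hTb, hcard, hsub, hABR3, hdisjABR, hunion⟩
  obtain ⟨hcni, hdni, hST⟩ := card_insert_helper (by rw [hcard, hSa, hTb])
  set q := j + 2 + a + b with hqdef
  have hq' : ((q:ℕ):ℤ) = 2*k+1 := by push_cast [hqdef]; omega
  set E : Finset ℤ := segSet q \ insert c (insert d (Sa ∪ Tb)) with hEdef
  have hEcard : E.card = j := by
    rw [hEdef, Finset.card_sdiff_of_subset hsub, segSet_card, hcard]
    omega
  obtain ⟨eE, hEinj, hEmem, hEsurj, hEsum⟩ := enum_exists E j hEcard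
  obtain ⟨eS, hSinj, hSmem, hSsurj, hSsum⟩ := enum_exists Sa a hSa
  obtain ⟨eT, hTinj, hTmem, hTsurj, hTsum⟩ := enum_exists Tb b hTb
  set f := mkf j a b c d eE eS eT with hfdef
  have hidx : j + 2 + ∑ i, seq2 j a b i = q := by rw [seq2_sum]; omega
  -- membership helpers
  have hEsub : ∀ z ∈ E, z ∈ segSet q := by
    intro z hz; exact (Finset.mem_sdiff.mp hz).1
  have hY : ∀ z ∈ Sa ∪ Tb, z ∈ segSet q :=
    fun z hz => hsub (Finset.mem_insert_of_mem (Finset.mem_insert_of_mem hz))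
  have hcmem : c ∈ segSet q := hsub (Finset.mem_insert_self _ _)
  have hdmem : d ∈ segSet q :=
    hsub (Finset.mem_insert_of_mem (Finset.mem_insert_self _ _))
  -- values of f
  have hmapsf : ∀ x, f x ∈ segSet q := by
    intro x
    rcases edge_cases x with ⟨i, h, rfl⟩ | rfl | rfl | ⟨mm, rfl⟩ | ⟨mm, rfl⟩
    · rw [hfdef, mkf_lt i h]; exact hEsub _ (hEmem _)
    · rw [hfdef, mkf_c]; exact hcmem
    · rw [hfdef, mkf_d]; exact hdmem
    · rw [hfdef, mkf_S mm]
      exact hY _ (Finset.mem_union_left _ (hSmem _))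
    · rw [hfdef, mkf_T mm]
      exact hY _ (Finset.mem_union_right _ (hTmem _))
  have hsurjf : ∀ z ∈ segSet q, ∃ x, f x = z := by
    intro z hz
    by_cases hzin : z ∈ insert c (insert d (Sa ∪ Tb))
    · simp only [Finset.mem_insert, Finset.mem_union] at hzin
      rcases hzin with rfl | rfl | hzS | hzT
      · exact ⟨.inl (jF j), by rw [hfdef, mkf_c]⟩
      · exact ⟨.inl (j1F j), by rw [hfdef, mkf_d]⟩
      · obtain ⟨i, hi⟩ := hSsurj z hzS
        refine ⟨.inr ⟨jF j, Fin.cast (seq2_at_jF j a b).symm i⟩, ?_⟩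
        rw [hfdef, mkf_S, fcast_cast]
        exact hi
      · obtain ⟨i, hi⟩ := hTsurj z hzT
        refine ⟨.inr ⟨j1F j, Fin.cast (seq2_at_j1F j a b).symm i⟩, ?_⟩
        rw [hfdef, mkf_T, fcast_cast]
        exact hi
    · have hzE : z ∈ E := Finset.mem_sdiff.mpr ⟨hz, hzin⟩
      obtain ⟨i, hi⟩ := hEsurj z hzE
      refine ⟨.inl ⟨(i:ℕ), by omega⟩, ?_⟩
      rw [hfdef, mkf_lt _ (by simpa using i.isLt)]
      convert hi using 2
  -- injectivity via counting
  have hinj : Function.Injective f := by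
    intro x y hxy
    exact Finset.inj_on_of_surj_on_of_card_le (s := Finset.univ) (t := segSet q)
      (fun x _ => f x) (fun x _ => hmapsf x)
      (fun z hz => by obtain ⟨x, hx⟩ := hsurjf z hz; exact ⟨x, Finset.mem_univ x, hx⟩)
      (by rw [Finset.card_univ, card_edge, segSet_card])
      (Finset.mem_univ x) (Finset.mem_univ y) hxy
  -- total sum of f is 0
  have htot : ∑ x : RTEdge (j+2) (seq2 j a b), f x = 0 := by
    have hbij : ∑ x ∈ (Finset.univ : Finset (RTEdge (j+2) (seq2 j a b))), f x =
        (segSet q).sum id := by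
      apply Finset.sum_bij (i := fun x _ => f x)
      · intro x _; exact hmapsf x
      · intro x _ y _ h; exact hinj h
      · intro z hz
        obtain ⟨x, hx⟩ := hsurjf z hz
        exact ⟨x, Finset.mem_univ x, hx⟩
      · intro x _; rfl
    rw [hbij, segSet_sum q k hq']
  -- vertexSum values
  have hvA : vertexSum (seq2 j a b) f (some (.inl (jF j))) = c + Sa.sum id := by
    rw [vs_A]
    have h1 : f (.inl (jF j)) = c := by rw [hfdef, mkf_c]
    have h2 : ∀ i : Fin a, f (.inr ⟨jF j, Fin.cast (seq2_at_jF j a b).symm i⟩) = eS i := by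
      intro i
      rw [hfdef, mkf_S, fcast_cast]
    rw [h1, Finset.sum_congr rfl (fun i _ => h2 i), hSsum]
  have hvB : vertexSum (seq2 j a b) f (some (.inl (j1F j))) = d + Tb.sum id := by
    rw [vs_B]
    have h1 : f (.inl (j1F j)) = d := by rw [hfdef, mkf_d]
    have h2 : ∀ i : Fin b, f (.inr ⟨j1F j, Fin.cast (seq2_at_j1F j a b).symm i⟩) = eT i := by
      intro i
      rw [hfdef, mkf_T, fcast_cast]
    rw [h1, Finset.sum_congr rfl (fun i _ => h2 i), hTsum]
  have hvnone : vertexSum (seq2 j a b) f none = -(Sa.sum id + Tb.sum id) := by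
    have h1 : vertexSum (seq2 j a b) f none = ∑ i : Fin (j+2), f (.inl i) := rfl
    have h2 := edge_total f
    rw [htot] at h2
    have h3 : ∀ i : Fin a, f (.inr ⟨jF j, Fin.cast (seq2_at_jF j a b).symm i⟩) = eS i := by
      intro i; rw [hfdef, mkf_S, fcast_cast]
    have h4 : ∀ i : Fin b, f (.inr ⟨j1F j, Fin.cast (seq2_at_j1F j a b).symm i⟩) = eT i := by
      intro i; rw [hfdef, mkf_T, fcast_cast]
    rw [Finset.sum_congr rfl (fun i _ => h3 i), Finset.sum_congr rfl (fun i _ => h4 i),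
      hSsum, hTsum] at h2
    rw [h1]
    omega
  have hvlt : ∀ (i : Fin (j+2)) (h : (i:ℕ) < j),
      vertexSum (seq2 j a b) f (some (.inl i)) = eE ⟨i, h⟩ := by
    intro i h
    rw [vs_lt f i h, hfdef, mkf_lt i h]
  have hvS : ∀ mm, vertexSum (seq2 j a b) f (some (.inr ⟨jF j, mm⟩)) =
      eS (Fin.cast (seq2_at_jF j a b) mm) := by
    intro mm
    show f (.inr ⟨jF j, mm⟩) = _
    rw [hfdef, mkf_S]
  have hvT : ∀ mm, vertexSum (seq2 j a b) f (some (.inr ⟨j1F j, mm⟩)) =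
      eT (Fin.cast (seq2_at_j1F j a b) mm) := by
    intro mm
    show f (.inr ⟨j1F j, mm⟩) = _
    rw [hfdef, mkf_T]
  -- membership in segSet (q+1)
  have hc2 : c ∉ Sa ∪ Tb := by
    intro h; exact hcni (Finset.mem_insert_of_mem h)
  have hcd : c ≠ d := by
    intro h; exact hcni (h ▸ Finset.mem_insert_self _ _)
  have hleft : ∀ z, z ∈ segSet q → z ≠ c → z ≠ d → z ∈ segSet (q+1) := by
    intro z hz h1 h2
    rw [← hunion]
    apply Finset.mem_union_left
    rw [Finset.mem_sdiff]
    refine ⟨hz, ?_⟩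
    simp only [Finset.mem_insert, Finset.mem_singleton]
    push_neg
    exact ⟨h1, h2⟩
  have hEleft : ∀ z ∈ E, z ∈ segSet (q+1) := by
    intro z hz
    rw [hEdef, Finset.mem_sdiff] at hz
    obtain ⟨hz1, hz2⟩ := hz
    simp only [Finset.mem_insert, Finset.mem_union] at hz2
    push_neg at hz2
    exact hleft z hz1 hz2.1 hz2.2.1
  have hYleft : ∀ z ∈ Sa ∪ Tb, z ∈ segSet (q+1) := by
    intro z hz
    refine hleft z (hY z hz) ?_ ?_
    · intro h; exact hc2 (h ▸ hz)
    · intro h; exact hdni (h ▸ hz)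
  have hABRmem : ∀ z ∈ ({c + Sa.sum id, d + Tb.sum id, -(Sa.sum id + Tb.sum id)} : Finset ℤ),
      z ∈ segSet (q+1) := by
    intro z hz
    rw [← hunion]
    exact Finset.mem_union_right _ hz
  -- MapsTo for vertexSum
  have hvmaps : ∀ v, vertexSum (seq2 j a b) f v ∈ segSet (q+1) := by
    intro v
    rcases vertex_cases v with rfl | ⟨i, h, rfl⟩ | rfl | rfl | ⟨mm, rfl⟩ | ⟨mm, rfl⟩
    · rw [hvnone]; exact hABRmem _ (by simp)
    · rw [hvlt i h]; exact hEleft _ (hEmem _)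
    · rw [hvA]; exact hABRmem _ (by simp)
    · rw [hvB]; exact hABRmem _ (by simp)
    · rw [hvS mm]; exact hYleft _ (Finset.mem_union_left _ (hSmem _))
    · rw [hvT mm]; exact hYleft _ (Finset.mem_union_right _ (hTmem _))
  -- surjectivity for vertexSum
  have hvsurj : ∀ z ∈ segSet (q+1), ∃ v, vertexSum (seq2 j a b) f v = z := by
    intro z hz
    rw [← hunion] at hz
    rcases Finset.mem_union.mp hz with hz1 | hz1
    · rw [Finset.mem_sdiff] at hz1
      obtain ⟨hz2, hz3⟩ := hz1
      simp only [Finset.mem_insert, Finset.mem_singleton] at hz3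
      push_neg at hz3
      by_cases hzin : z ∈ insert c (insert d (Sa ∪ Tb))
      · simp only [Finset.mem_insert, Finset.mem_union] at hzin
        rcases hzin with rfl | rfl | hzS | hzT
        · exact absurd rfl hz3.1
        · exact absurd rfl hz3.2
        · obtain ⟨i, hi⟩ := hSsurj z hzS
          refine ⟨some (.inr ⟨jF j, Fin.cast (seq2_at_jF j a b).symm i⟩), ?_⟩
          rw [hvS, fcast_cast]
          exact hi
        · obtain ⟨i, hi⟩ := hTsurj z hzT
          refine ⟨some (.inr ⟨j1F j, Fin.cast (seq2_at_j1F j a b).symm i⟩), ?_⟩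
          rw [hvT, fcast_cast]
          exact hi
      · have hzE : z ∈ E := Finset.mem_sdiff.mpr ⟨hz2, hzin⟩
        obtain ⟨i, hi⟩ := hEsurj z hzE
        refine ⟨some (.inl ⟨(i:ℕ), by omega⟩), ?_⟩
        rw [hvlt _ (by simpa using i.isLt)]
        exact hi
    · simp only [Finset.mem_insert, Finset.mem_singleton] at hz1
      rcases hz1 with rfl | rfl | rfl
      · exact ⟨some (.inl (jF j)), hvA⟩
      · exact ⟨some (.inl (j1F j)), hvB⟩
      · exact ⟨none, hvnone⟩
  -- vertex injectivity via counting
  have hvinj : Function.Injective (vertexSum (seq2 j a b) f) := by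
    intro x y hxy
    exact Finset.inj_on_of_surj_on_of_card_le (s := Finset.univ) (t := segSet (q+1))
      (fun v _ => vertexSum (seq2 j a b) f v) (fun v _ => hvmaps v)
      (fun z hz => by obtain ⟨v, hv⟩ := hvsurj z hz; exact ⟨v, Finset.mem_univ v, hv⟩)
      (by rw [Finset.card_univ, card_vertex, segSet_card])
      (Finset.mem_univ x) (Finset.mem_univ y) hxy
  -- assemble
  refine ⟨f, ?_, ?_⟩
  · rw [hidx]
    exact ⟨fun x _ => hmapsf x, fun x _ y _ h => hinj h,
      fun z hz => by obtain ⟨x, hx⟩ := hsurjf z (Finset.mem_coe.mp hz);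
                     exact ⟨x, Set.mem_univ x, hx⟩⟩
  · rw [hidx]
    exact ⟨fun v _ => hvmaps v, fun x _ y _ h => hvinj h,
      fun z hz => by obtain ⟨v, hv⟩ := hvsurj z (Finset.mem_coe.mp hz);
                     exact ⟨v, Set.mem_univ v, hv⟩⟩

/-- C1 : `a, b` even (forces `j` odd, so `j ≥ 1`). -/
lemma specC1 (j a' b' : ℕ) (k : ℤ) (ha : 1 ≤ a') (hb : 1 ≤ b') (hj : 1 ≤ j)
    (hq : (j:ℤ) + 2 + (2*a' : ℕ) + (2*b' : ℕ) = 2*k+1) : Spec j (2*a') (2*b') := by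
  have hk : (a':ℤ) + b' + 1 ≤ k := by push_cast at hq; omega
  have h1 : (1:ℤ) ∉ insert k (SymB ((a':ℤ)+2) ((a':ℤ)+(b':ℤ))) := by
    simp only [Finset.mem_insert, mem_SymB]; omega
  have h2 : (k:ℤ) ∉ SymB ((a':ℤ)+2) ((a':ℤ)+(b':ℤ)) := by
    simp only [mem_SymB]; omega
  apply spec_of j _ _ k (-1) (-1) 0
    (SymB 2 ((a':ℤ)+1)) (insert 1 (insert k (SymB ((a':ℤ)+2) ((a':ℤ)+(b':ℤ))))) hq
    (by omega) (Or.inr ⟨rfl, rfl⟩) (by omega) (by constructor <;> omega)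
  · rw [card_SymB _ _ (by omega)]; omega
  · rw [Finset.card_insert_of_notMem h1, Finset.card_insert_of_notMem h2,
      card_SymB _ _ (by omega)]
    omega
  · rw [Finset.disjoint_left]
    intro z hz hz'
    simp only [mem_SymB] at hz
    simp only [Finset.mem_insert, mem_SymB] at hz'
    omega
  · simp only [Finset.mem_union, Finset.mem_insert, mem_SymB]; omega
  · simp only [Finset.mem_union, Finset.mem_insert, mem_SymB]; omega
  · intro z hz
    simp only [Finset.mem_union, Finset.mem_insert, mem_SymB] at hz
    omega
  · rw [sum_SymB _ _ (by omega), Finset.sum_insert h1, Finset.sum_insert h2,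
      sum_SymB _ _ (by omega)]
    simp only [id_eq]
    ext z
    simp only [Finset.mem_insert, Finset.mem_singleton]
    omega

/-- C2 : `a` even, `b` odd, `j ≥ 2` (even). -/
lemma specC2 (j a' b' : ℕ) (k : ℤ) (ha : 1 ≤ a') (hb : 1 ≤ b') (hj : 2 ≤ j)
    (hq : (j:ℤ) + 2 + (2*a' : ℕ) + (2*b'+1 : ℕ) = 2*k+1) : Spec j (2*a') (2*b'+1) := by
  have hk : (a':ℤ) + b' + 2 ≤ k := by push_cast at hq; omega
  have h1 : (k:ℤ) ∉ insert 2 (insert (-1) (SymB ((a':ℤ)+3) ((a':ℤ)+(b':ℤ)+1))) := by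
    simp only [Finset.mem_insert, mem_SymB]; omega
  have h2 : (2:ℤ) ∉ insert (-1) (SymB ((a':ℤ)+3) ((a':ℤ)+(b':ℤ)+1)) := by
    simp only [Finset.mem_insert, mem_SymB]; omega
  have h3 : (-1:ℤ) ∉ SymB ((a':ℤ)+3) ((a':ℤ)+(b':ℤ)+1) := by
    simp only [mem_SymB]; omega
  apply spec_of j _ _ k 1 1 0
    (SymB 3 ((a':ℤ)+2))
    (insert k (insert 2 (insert (-1) (SymB ((a':ℤ)+3) ((a':ℤ)+(b':ℤ)+1))))) hq
    (by omega) (Or.inr ⟨rfl, rfl⟩) (by omega) (by constructor <;> omega)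
  · rw [card_SymB _ _ (by omega)]; omega
  · rw [Finset.card_insert_of_notMem h1, Finset.card_insert_of_notMem h2,
      Finset.card_insert_of_notMem h3, card_SymB _ _ (by omega)]
    omega
  · rw [Finset.disjoint_left]
    intro z hz hz'
    simp only [mem_SymB] at hz
    simp only [Finset.mem_insert, mem_SymB] at hz'
    omega
  · simp only [Finset.mem_union, Finset.mem_insert, mem_SymB]; omega
  · simp only [Finset.mem_union, Finset.mem_insert, mem_SymB]; omega
  · intro z hz
    simp only [Finset.mem_union, Finset.mem_insert, mem_SymB] at hz
    omega
  · rw [sum_SymB _ _ (by omega), Finset.sum_insert h1, Finset.sum_insert h2,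
      Finset.sum_insert h3, sum_SymB _ _ (by omega)]
    simp only [id_eq]
    ext z
    simp only [Finset.mem_insert, Finset.mem_singleton]
    omega

/-- C3 : `j = 0`, `a` even, `b` odd. -/
lemma specC3 (a' b' : ℕ) (k : ℤ) (ha : 1 ≤ a') (hb : 1 ≤ b')
    (hq : (0:ℤ) + 2 + (2*a' : ℕ) + (2*b'+1 : ℕ) = 2*k+1) : Spec 0 (2*a') (2*b'+1) := by
  have hk : k = (a':ℤ) + b' + 1 := by push_cast at hq; omega
  have h1 : (1:ℤ) ∉ insert k (SymB 2 (a':ℤ)) := by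
    simp only [Finset.mem_insert, mem_SymB]; omega
  have h2 : (k:ℤ) ∉ SymB 2 (a':ℤ) := by
    simp only [mem_SymB]; omega
  have h3 : (-k:ℤ) ∉ SymB ((a':ℤ)+1) (k-1) := by
    simp only [mem_SymB]; omega
  apply spec_of 0 _ _ k (-1) 0 (-1)
    (insert 1 (insert k (SymB 2 (a':ℤ))))
    (insert (-k) (SymB ((a':ℤ)+1) (k-1))) hq
    (by omega) (Or.inl ⟨rfl, rfl⟩) (by omega) (by constructor <;> omega)
  · rw [Finset.card_insert_of_notMem h1, Finset.card_insert_of_notMem h2,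
      card_SymB _ _ (by omega)]
    omega
  · rw [Finset.card_insert_of_notMem h3, card_SymB _ _ (by omega)]; omega
  · rw [Finset.disjoint_left]
    intro z hz hz'
    simp only [Finset.mem_insert, mem_SymB] at hz hz'
    omega
  · simp only [Finset.mem_union, Finset.mem_insert, mem_SymB]; omega
  · simp only [Finset.mem_union, Finset.mem_insert, mem_SymB]; omega
  · intro z hz
    simp only [Finset.mem_union, Finset.mem_insert, mem_SymB] at hz
    omega
  · rw [Finset.sum_insert h1, Finset.sum_insert h2, sum_SymB _ _ (by omega),
      Finset.sum_insert h3, sum_SymB _ _ (by omega)]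
    simp only [id_eq]
    ext z
    simp only [Finset.mem_insert, Finset.mem_singleton]
    omega

/-- C4 : `a, b` odd `≥ 3`, `j ≥ 1` (odd). -/
lemma specC4 (j a' b' : ℕ) (k : ℤ) (hj : 1 ≤ j)
    (hq : (j:ℤ) + 2 + (2*a'+3 : ℕ) + (2*b'+3 : ℕ) = 2*k+1) : Spec j (2*a'+3) (2*b'+3) := by
  have hk : (a':ℤ) + b' + 4 ≤ k := by push_cast at hq; omega
  have h1 : (1:ℤ) ∉ insert 2 (insert (-3) (SymB 4 ((a':ℤ)+3))) := by
    simp only [Finset.mem_insert, mem_SymB]; omega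
  have h2 : (2:ℤ) ∉ insert (-3) (SymB 4 ((a':ℤ)+3)) := by
    simp only [Finset.mem_insert, mem_SymB]; omega
  have h3 : (-3:ℤ) ∉ SymB 4 ((a':ℤ)+3) := by
    simp only [mem_SymB]; omega
  have h4 : (k:ℤ) ∉ insert 3 (insert (-2) (SymB ((a':ℤ)+4) ((a':ℤ)+(b':ℤ)+3))) := by
    simp only [Finset.mem_insert, mem_SymB]; omega
  have h5 : (3:ℤ) ∉ insert (-2) (SymB ((a':ℤ)+4) ((a':ℤ)+(b':ℤ)+3)) := by
    simp only [Finset.mem_insert, mem_SymB]; omega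
  have h6 : (-2:ℤ) ∉ SymB ((a':ℤ)+4) ((a':ℤ)+(b':ℤ)+3) := by
    simp only [mem_SymB]; omega
  apply spec_of j _ _ k (-1) (-1) 0
    (insert 1 (insert 2 (insert (-3) (SymB 4 ((a':ℤ)+3)))))
    (insert k (insert 3 (insert (-2) (SymB ((a':ℤ)+4) ((a':ℤ)+(b':ℤ)+3))))) hq
    (by omega) (Or.inr ⟨rfl, rfl⟩) (by omega) (by constructor <;> omega)
  · rw [Finset.card_insert_of_notMem h1, Finset.card_insert_of_notMem h2,
      Finset.card_insert_of_notMem h3, card_SymB _ _ (by omega)]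
    omega
  · rw [Finset.card_insert_of_notMem h4, Finset.card_insert_of_notMem h5,
      Finset.card_insert_of_notMem h6, card_SymB _ _ (by omega)]
    omega
  · rw [Finset.disjoint_left]
    intro z hz hz'
    simp only [Finset.mem_insert, mem_SymB] at hz hz'
    omega
  · simp only [Finset.mem_union, Finset.mem_insert, mem_SymB]; omega
  · simp only [Finset.mem_union, Finset.mem_insert, mem_SymB]; omega
  · intro z hz
    simp only [Finset.mem_union, Finset.mem_insert, mem_SymB] at hz
    omega
  · rw [Finset.sum_insert h1, Finset.sum_insert h2, Finset.sum_insert h3,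
      sum_SymB _ _ (by omega), Finset.sum_insert h4, Finset.sum_insert h5,
      Finset.sum_insert h6, sum_SymB _ _ (by omega)]
    simp only [id_eq]
    ext z
    simp only [Finset.mem_insert, Finset.mem_singleton]
    omega

/-- C5 : `a` odd `≥ 3`, `b` even, `j ≥ 2` (even). -/
lemma specC5 (j a' b' : ℕ) (k : ℤ) (hj : 2 ≤ j)
    (hq : (j:ℤ) + 2 + (2*a'+3 : ℕ) + (2*b'+2 : ℕ) = 2*k+1) : Spec j (2*a'+3) (2*b'+2) := by
  have hk : (a':ℤ) + b' + 4 ≤ k := by push_cast at hq; omega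
  have h1 : (-1:ℤ) ∉ insert (-2) (insert 3 (SymB 4 ((a':ℤ)+3))) := by
    simp only [Finset.mem_insert, mem_SymB]; omega
  have h2 : (-2:ℤ) ∉ insert 3 (SymB 4 ((a':ℤ)+3)) := by
    simp only [Finset.mem_insert, mem_SymB]; omega
  have h3 : (3:ℤ) ∉ SymB 4 ((a':ℤ)+3) := by
    simp only [mem_SymB]; omega
  have h4 : (k:ℤ) ∉ insert 1 (SymB ((a':ℤ)+4) ((a':ℤ)+(b':ℤ)+3)) := by
    simp only [Finset.mem_insert, mem_SymB]; omega
  have h5 : (1:ℤ) ∉ SymB ((a':ℤ)+4) ((a':ℤ)+(b':ℤ)+3) := by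
    simp only [mem_SymB]; omega
  apply spec_of j _ _ k 2 2 0
    (insert (-1) (insert (-2) (insert 3 (SymB 4 ((a':ℤ)+3)))))
    (insert k (insert 1 (SymB ((a':ℤ)+4) ((a':ℤ)+(b':ℤ)+3)))) hq
    (by omega) (Or.inr ⟨rfl, rfl⟩) (by omega) (by constructor <;> omega)
  · rw [Finset.card_insert_of_notMem h1, Finset.card_insert_of_notMem h2,
      Finset.card_insert_of_notMem h3, card_SymB _ _ (by omega)]
    omega
  · rw [Finset.card_insert_of_notMem h4, Finset.card_insert_of_notMem h5,
      card_SymB _ _ (by omega)]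
    omega
  · rw [Finset.disjoint_left]
    intro z hz hz'
    simp only [Finset.mem_insert, mem_SymB] at hz hz'
    omega
  · simp only [Finset.mem_union, Finset.mem_insert, mem_SymB]; omega
  · simp only [Finset.mem_union, Finset.mem_insert, mem_SymB]; omega
  · intro z hz
    simp only [Finset.mem_union, Finset.mem_insert, mem_SymB] at hz
    omega
  · rw [Finset.sum_insert h1, Finset.sum_insert h2, Finset.sum_insert h3,
      sum_SymB _ _ (by omega), Finset.sum_insert h4, Finset.sum_insert h5,
      sum_SymB _ _ (by omega)]
    simp only [id_eq]
    ext z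
    simp only [Finset.mem_insert, Finset.mem_singleton]
    omega

/-- C6 : `j = 0`, `a` odd `≥ 3`, `b` even. -/
lemma specC6 (a' b' : ℕ) (k : ℤ)
    (hq : (0:ℤ) + 2 + (2*a'+3 : ℕ) + (2*b'+2 : ℕ) = 2*k+1) : Spec 0 (2*a'+3) (2*b'+2) := by
  have hk : k = (a':ℤ) + b' + 3 := by push_cast at hq; omega
  have h1 : (k:ℤ) ∉ insert 2 (insert (-1) (SymB 3 ((a':ℤ)+2))) := by
    simp only [Finset.mem_insert, mem_SymB]; omega
  have h2 : (2:ℤ) ∉ insert (-1) (SymB 3 ((a':ℤ)+2)) := by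
    simp only [Finset.mem_insert, mem_SymB]; omega
  have h3 : (-1:ℤ) ∉ SymB 3 ((a':ℤ)+2) := by
    simp only [mem_SymB]; omega
  have h4 : (-k:ℤ) ∉ insert (-2) (SymB ((a':ℤ)+3) (k-1)) := by
    simp only [Finset.mem_insert, mem_SymB]; omega
  have h5 : (-2:ℤ) ∉ SymB ((a':ℤ)+3) (k-1) := by
    simp only [mem_SymB]; omega
  apply spec_of 0 _ _ k 1 0 1
    (insert k (insert 2 (insert (-1) (SymB 3 ((a':ℤ)+2)))))
    (insert (-k) (insert (-2) (SymB ((a':ℤ)+3) (k-1)))) hq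
    (by omega) (Or.inl ⟨rfl, rfl⟩) (by omega) (by constructor <;> omega)
  · rw [Finset.card_insert_of_notMem h1, Finset.card_insert_of_notMem h2,
      Finset.card_insert_of_notMem h3, card_SymB _ _ (by omega)]
    omega
  · rw [Finset.card_insert_of_notMem h4, Finset.card_insert_of_notMem h5,
      card_SymB _ _ (by omega)]
    omega
  · rw [Finset.disjoint_left]
    intro z hz hz'
    simp only [Finset.mem_insert, mem_SymB] at hz hz'
    omega
  · simp only [Finset.mem_union, Finset.mem_insert, mem_SymB]; omega
  · simp only [Finset.mem_union, Finset.mem_insert, mem_SymB]; omega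
  · intro z hz
    simp only [Finset.mem_union, Finset.mem_insert, mem_SymB] at hz
    omega
  · rw [Finset.sum_insert h1, Finset.sum_insert h2, Finset.sum_insert h3,
      sum_SymB _ _ (by omega), Finset.sum_insert h4, Finset.sum_insert h5,
      sum_SymB _ _ (by omega)]
    simp only [id_eq]
    ext z
    simp only [Finset.mem_insert, Finset.mem_singleton]
    omega

/-- C7 : `a = 1`, `b` even (forces `j` even). -/
lemma specC7 (j b' : ℕ) (k : ℤ)
    (hq : (j:ℤ) + 2 + (1 : ℕ) + (2*b'+2 : ℕ) = 2*k+1) : Spec j 1 (2*b'+2) := by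
  have hk : (b':ℤ) + 2 ≤ k := by push_cast at hq; omega
  have h1 : (-k:ℤ) ∉ insert (-1) (SymB 2 ((b':ℤ)+1)) := by
    simp only [Finset.mem_insert, mem_SymB]; omega
  have h2 : (-1:ℤ) ∉ SymB 2 ((b':ℤ)+1) := by
    simp only [mem_SymB]; omega
  apply spec_of j _ _ k 1 1 0
    ({k}) (insert (-k) (insert (-1) (SymB 2 ((b':ℤ)+1)))) hq
    (by omega) (Or.inr ⟨rfl, rfl⟩) (by omega) (by constructor <;> omega)
  · exact Finset.card_singleton k
  · rw [Finset.card_insert_of_notMem h1, Finset.card_insert_of_notMem h2,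
      card_SymB _ _ (by omega)]
    omega
  · rw [Finset.disjoint_left]
    intro z hz hz'
    simp only [Finset.mem_singleton] at hz
    simp only [Finset.mem_insert, mem_SymB] at hz'
    omega
  · simp only [Finset.mem_union, Finset.mem_insert, Finset.mem_singleton, mem_SymB]; omega
  · simp only [Finset.mem_union, Finset.mem_insert, Finset.mem_singleton, mem_SymB]; omega
  · intro z hz
    simp only [Finset.mem_union, Finset.mem_insert, Finset.mem_singleton, mem_SymB] at hz
    omega
  · rw [Finset.sum_singleton, Finset.sum_insert h1, Finset.sum_insert h2,
      sum_SymB _ _ (by omega)]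
    simp only [id_eq]
    ext z
    simp only [Finset.mem_insert, Finset.mem_singleton]
    omega

/-- C8 : `a = 1`, `b` odd `≥ 3`, `j ≥ 3` (odd). -/
lemma specC8 (j b' : ℕ) (k : ℤ) (hj : 3 ≤ j)
    (hq : (j:ℤ) + 2 + (1 : ℕ) + (2*b'+3 : ℕ) = 2*k+1) : Spec j 1 (2*b'+3) := by
  have hk : (b':ℤ) + 4 ≤ k := by push_cast at hq; omega
  have h1 : (-k:ℤ) ∉ insert (-3) (insert 2 (SymB 4 ((b':ℤ)+3))) := by
    simp only [Finset.mem_insert, mem_SymB]; omega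
  have h2 : (-3:ℤ) ∉ insert 2 (SymB 4 ((b':ℤ)+3)) := by
    simp only [Finset.mem_insert, mem_SymB]; omega
  have h3 : (2:ℤ) ∉ SymB 4 ((b':ℤ)+3) := by
    simp only [mem_SymB]; omega
  apply spec_of j _ _ k 1 1 0
    ({k}) (insert (-k) (insert (-3) (insert 2 (SymB 4 ((b':ℤ)+3))))) hq
    (by omega) (Or.inr ⟨rfl, rfl⟩) (by omega) (by constructor <;> omega)
  · exact Finset.card_singleton k
  · rw [Finset.card_insert_of_notMem h1, Finset.card_insert_of_notMem h2,
      Finset.card_insert_of_notMem h3, card_SymB _ _ (by omega)]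
    omega
  · rw [Finset.disjoint_left]
    intro z hz hz'
    simp only [Finset.mem_singleton] at hz
    simp only [Finset.mem_insert, mem_SymB] at hz'
    omega
  · simp only [Finset.mem_union, Finset.mem_insert, Finset.mem_singleton, mem_SymB]; omega
  · simp only [Finset.mem_union, Finset.mem_insert, Finset.mem_singleton, mem_SymB]; omega
  · intro z hz
    simp only [Finset.mem_union, Finset.mem_insert, Finset.mem_singleton, mem_SymB] at hz
    omega
  · rw [Finset.sum_singleton, Finset.sum_insert h1, Finset.sum_insert h2,
      Finset.sum_insert h3, sum_SymB _ _ (by omega)]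
    simp only [id_eq]
    ext z
    simp only [Finset.mem_insert, Finset.mem_singleton]
    omega


/-- Every caterpillar of diameter `4` with an odd number of edges is super
edge-graceful, except the trees `RT(0^j, 1, b)` where `j` and `b` are positive odd
integers with `j = 1` or `b = 1`.  Stated for `RT(0^j, a, b)` with (wlog) `a ≤ b`:
it is super edge-graceful iff it is not the case that `a = 1` and `j, b` are both odd
with `j = 1` or `b = 1`. -/
theorem stmt8 (j a b : ℕ) (ha : 1 ≤ a) (hb : 1 ≤ b) (hab : a ≤ b)
    (hodd : Odd (j + 2 + a + b)) :
    IsSEG (seq2 j a b) ↔ ¬ (a = 1 ∧ Odd j ∧ Odd b ∧ (j = 1 ∨ b = 1)) := by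
  obtain ⟨t, ht⟩ := hodd
  have hk : ((j:ℤ)+2+a+b) = 2*(t:ℤ)+1 := by push_cast; omega
  constructor
  · intro hseg
    rintro ⟨rfl, hoj, hob, hjb⟩
    have hspec := spec_of_isSEG j 1 b (t:ℤ) hk hseg
    rcases hjb with rfl | rfl
    · exact not_spec_a1j1 b (t:ℤ) (by push_cast at hk ⊢; omega) hspec
    · exact not_spec_a1b1 j (t:ℤ) (by push_cast at hk ⊢; omega) hspec
  · intro hne
    apply isSEG_of_spec j a b (t:ℤ) hk
    rcases Nat.even_or_odd a with hea | hoa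
    · obtain ⟨a', ha'⟩ := hea
      have ha2 : a = 2*a' := by omega
      subst ha2
      rcases Nat.even_or_odd b with heb | hob
      · obtain ⟨b', hb'⟩ := heb
        have hb2 : b = 2*b' := by omega
        subst hb2
        exact specC1 j a' b' (t:ℤ) (by omega) (by omega) (by omega)
          (by push_cast at hk ⊢; omega)
      · obtain ⟨b', hb'⟩ := hob
        have hb2 : b = 2*b'+1 := by omega
        subst hb2
        rcases Nat.eq_zero_or_pos j with rfl | hj
        · exact specC3 a' b' (t:ℤ) (by omega) (by omega) (by push_cast at hk ⊢; omega)
        · have hj2 : 2 ≤ j := by omega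
          exact specC2 j a' b' (t:ℤ) (by omega) (by omega) hj2
            (by push_cast at hk ⊢; omega)
    · obtain ⟨α, hα⟩ := hoa
      by_cases ha1 : a = 1
      · subst ha1
        rcases Nat.even_or_odd b with heb | hob
        · obtain ⟨b', hb'⟩ := heb
          have hb2 : b = 2*(b'-1)+2 := by omega
          subst hb2
          exact specC7 j (b'-1) (t:ℤ) (by push_cast at hk ⊢; omega)
        · have hoj : Odd j := by
            rcases Nat.even_or_odd j with hej | hoj
            · exfalso
              obtain ⟨s, hs⟩ := hej
              obtain ⟨r, hr⟩ := hob
              omega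
            · exact hoj
          have hj1 : j ≠ 1 ∧ b ≠ 1 := by
            constructor <;> intro hh <;>
              exact hne ⟨rfl, hoj, hob, by omega⟩
          obtain ⟨r, hr⟩ := hob
          obtain ⟨s, hs⟩ := hoj
          have hb2 : b = 2*(r-1)+3 := by omega
          subst hb2
          exact specC8 j (r-1) (t:ℤ) (by omega) (by push_cast at hk ⊢; omega)
      · have ha3 : a = 2*(α-1)+3 := by omega
        subst ha3
        rcases Nat.even_or_odd b with heb | hob
        · obtain ⟨b', hb'⟩ := heb
          have hb2 : b = 2*(b'-1)+2 := by omega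
          subst hb2
          rcases Nat.eq_zero_or_pos j with rfl | hj
          · exact specC6 (α-1) (b'-1) (t:ℤ) (by push_cast at hk ⊢; omega)
          · have hj2 : 2 ≤ j := by
              rcases Nat.even_or_odd j with hej | hoj
              · obtain ⟨s, hs⟩ := hej; omega
              · exfalso; obtain ⟨s, hs⟩ := hoj; omega
            exact specC5 j (α-1) (b'-1) (t:ℤ) hj2 (by push_cast at hk ⊢; omega)
        · obtain ⟨r, hr⟩ := hob
          have hb2 : b = 2*(r-1)+3 := by omega
          subst hb2
          exact specC4 j (α-1) (r-1) (t:ℤ) (by omega) (by push_cast at hk ⊢; omega)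
end

section
/- Let j, k ≥ 0 be even integers and l ≥ 1 an odd integer with k + l ≥ 3, and let n = j + k + l. Let (a_1, …, a_n) be a sequence of nonnegative integers such that a_i = 0 for 1 ≤ i ≤ j; a_i is positive and even for j+1 ≤ i ≤ j+k, with these entries nondecreasing; and a_i is positive and odd for j+k+1 ≤ i ≤ n, with these entries nondecreasing. Then the rooted tree RT(a_1, …, a_n) is super edge-graceful. -/
/-! Auxiliary definitions for the construction. -/

def sgn (t : ℕ) : ℤ := if t % 2 = 0 then 1 else -1

def Eval (h m : ℕ) : ℤ :=
  if m = 0 then 2*h+1 else if m ≤ h then 2*(m:ℤ) - 1 else 2*(h:ℤ) + 1 - 2*m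

def Zval (h m : ℕ) : ℤ :=
  if m = 0 then -(2*(h:ℤ)+1) else if m ≤ h then 2*(m:ℤ) - 2*h - 2 else 4*(h:ℤ) + 2 - 2*m

def Cval (h m : ℕ) : ℤ := Eval h m + Zval h m

lemma Eval_inj {h m m' : ℕ} (hm : m < 2*h+1) (hm' : m' < 2*h+1)
    (he : Eval h m = Eval h m') : m = m' := by
  unfold Eval at he; split_ifs at he <;> omega

lemma Zval_inj {h m m' : ℕ} (hm : m < 2*h+1) (hm' : m' < 2*h+1)
    (he : Zval h m = Zval h m') : m = m' := by
  unfold Zval at he; split_ifs at he <;> omega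

lemma Eval_ne_Zval {h m m' : ℕ} (hm : m < 2*h+1) (hm' : m' < 2*h+1) :
    Eval h m ≠ Zval h m' := by
  unfold Eval Zval; split_ifs <;> omega

lemma Eval_bound {h m : ℕ} (hm : m < 2*h+1) :
    Eval h m ≠ 0 ∧ -(2*(h:ℤ)+1) ≤ Eval h m ∧ Eval h m ≤ 2*(h:ℤ)+1 := by
  unfold Eval; split_ifs <;> exact ⟨by omega, by omega, by omega⟩

lemma Zval_bound {h m : ℕ} (hm : m < 2*h+1) :
    Zval h m ≠ 0 ∧ -(2*(h:ℤ)+1) ≤ Zval h m ∧ Zval h m ≤ 2*(h:ℤ)+1 := by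
  unfold Zval; split_ifs <;> exact ⟨by omega, by omega, by omega⟩

lemma Zval_ne_top {h m : ℕ} : Zval h m ≠ 2*(h:ℤ)+1 := by
  unfold Zval; split_ifs <;> omega

lemma Cval_inj {h m m' : ℕ} (hm : m < 2*h+1) (hm' : m' < 2*h+1)
    (he : Cval h m = Cval h m') : m = m' := by
  unfold Cval Eval Zval at he; split_ifs at he <;> omega

lemma Cval_bound {h m : ℕ} (hm : m < 2*h+1) :
    -(2*(h:ℤ)) ≤ Cval h m ∧ Cval h m ≤ 2*(h:ℤ) := by
  unfold Cval Eval Zval; split_ifs <;> exact ⟨by omega, by omega⟩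

lemma Cval_ne_Zval {h m m' : ℕ} (hm : m < 2*h+1) (hm' : m' < 2*h+1) :
    Cval h m ≠ Zval h m' := by
  unfold Cval Eval Zval; split_ifs <;> omega

lemma pairsum (g : ℕ → ℤ) (c : ℕ) :
    ∑ r ∈ Finset.range (2*c), sgn r * g (r/2) = 0 := by
  induction c with
  | zero => simp
  | succ c ih =>
      rw [show 2*(c+1) = (2*c)+1+1 by ring, Finset.sum_range_succ, Finset.sum_range_succ, ih]
      rw [show (2*c)/2 = c by omega, show (2*c+1)/2 = c by omega]
      rw [show sgn (2*c) = 1 by unfold sgn; split_ifs <;> omega]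
      rw [show sgn (2*c+1) = -1 by unfold sgn; split_ifs <;> omega]
      ring

lemma Eval_sum (h : ℕ) : ∑ x ∈ Finset.range (2*h+1), Eval h x = 2*(h:ℤ)+1 := by
  rw [Finset.sum_range_succ']
  have key : ∑ x ∈ Finset.range (2*h), Eval h (x+1) = 0 := by
    rw [show 2*h = h + h by ring]
    rw [Finset.range_eq_Ico, ← Finset.sum_Ico_consecutive _ (Nat.zero_le h)
      (by omega : h ≤ h + h)]
    have e1 : ∑ x ∈ Finset.Ico 0 h, Eval h (x+1) = ∑ x ∈ Finset.range h, (2*(x:ℤ)+1) := by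
      rw [← Finset.range_eq_Ico]
      refine Finset.sum_congr rfl fun x hx => ?_
      rw [Finset.mem_range] at hx
      unfold Eval
      split_ifs <;> first | contradiction | (push_cast; omega)
    have e2 : ∑ x ∈ Finset.Ico h (h+h), Eval h (x+1) =
        ∑ x ∈ Finset.range h, (-(2*(x:ℤ)+1)) := by
      rw [Finset.sum_Ico_eq_sum_range, show h + h - h = h by omega]
      refine Finset.sum_congr rfl fun x hx => ?_
      rw [Finset.mem_range] at hx
      unfold Eval
      split_ifs <;> first | contradiction | (push_cast; omega)
    rw [e1, e2, ← Finset.sum_add_distrib]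
    exact Finset.sum_eq_zero fun x _ => by ring
  rw [key]; unfold Eval; simp

lemma segSet_even_s10 (M : ℕ) :
    segSet (2*M) = (Finset.Icc (-(M:ℤ)) M).erase 0 := by
  unfold segSet
  rw [if_pos (by omega), Nat.mul_div_cancel_left _ (by norm_num)]

lemma segSet_odd_s10 (M : ℕ) :
    segSet (2*M+1) = Finset.Icc (-(M:ℤ)) M := by
  unfold segSet
  rw [if_neg (by omega), show (2*M+1)/2 = M by omega]

lemma card_segSet_even (M : ℕ) : (segSet (2*M)).card = 2*M := by
  rw [segSet_even_s10, Finset.card_erase_of_mem (by simp), Int.card_Icc]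
  omega

lemma card_segSet_odd (M : ℕ) : (segSet (2*M+1)).card = 2*M+1 := by
  rw [segSet_odd_s10, Int.card_Icc]; omega

lemma bijOn_of_injective {α : Type*} [Fintype α] (f : α → ℤ) (s : Finset ℤ)
    (hinj : Function.Injective f) (hmem : ∀ x, f x ∈ s)
    (hcard : s.card = Fintype.card α) :
    Set.BijOn f Set.univ ↑s := by
  refine ⟨fun x _ => hmem x, fun x _ y _ h => hinj h, fun y hy => ?_⟩
  have himg : Finset.univ.image f = s :=
    Finset.eq_of_subset_of_card_le
      (fun z hz => by obtain ⟨x, _, rfl⟩ := Finset.mem_image.mp hz; exact hmem x)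
      (by rw [hcard, Finset.card_image_of_injective _ hinj, Finset.card_univ])
  rw [Finset.mem_coe, ← himg, Finset.mem_image] at hy
  obtain ⟨x, _, rfl⟩ := hy
  exact ⟨x, trivial, rfl⟩

def Pfun {n : ℕ} (a : Fin n → ℕ) (i : Fin n) : ℕ := ∑ i' ∈ Finset.Iio i, a i' / 2

def labE (j k l : ℕ) (i : ℕ) : ℤ :=
  if i < j + k then sgn i * ((l + 1 + i/2 : ℕ) : ℤ) else Eval (l/2) (i - (j+k))

def labL (j k l : ℕ) {n : ℕ} (a : Fin n → ℕ) (i : Fin n) (r : ℕ) : ℤ :=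
  if j + k ≤ (i : ℕ) ∧ r = a i - 1 then Zval (l/2) ((i:ℕ) - (j+k))
  else sgn r * ((l + (j+k)/2 + 1 + Pfun a i + r/2 : ℕ) : ℤ)

def lab (j k l : ℕ) {n : ℕ} (a : Fin n → ℕ) : RTEdge n a → ℤ
  | Sum.inl i => labE j k l (i : ℕ)
  | Sum.inr ⟨i, r⟩ => labL j k l a i (r : ℕ)


/-- Let `j, k ≥ 0` be even, `l ≥ 1` odd, with `k + l ≥ 3`, `n = j + k + l`, and let
`(a_1, …, a_n)` consist of `j` zeros, followed by `k` positive even entries in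
nondecreasing order, followed by `l` positive odd entries in nondecreasing order.
Then `RT(a_1, …, a_n)` is super edge-graceful. -/
theorem stmt10 (j k l : ℕ) (hj : Even j) (hk : Even k) (hl : Odd l)
    (hl1 : 1 ≤ l) (hkl : 3 ≤ k + l)
    (a : Fin (j + k + l) → ℕ)
    (h0 : ∀ i : Fin (j + k + l), (i : ℕ) < j → a i = 0)
    (hev : ∀ i : Fin (j + k + l), j ≤ (i : ℕ) → (i : ℕ) < j + k → 0 < a i ∧ Even (a i))
    (hod : ∀ i : Fin (j + k + l), j + k ≤ (i : ℕ) → 0 < a i ∧ Odd (a i))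
    (hmono₁ : ∀ i₁ i₂ : Fin (j + k + l),
      j ≤ (i₁ : ℕ) → i₁ ≤ i₂ → (i₂ : ℕ) < j + k → a i₁ ≤ a i₂)
    (hmono₂ : ∀ i₁ i₂ : Fin (j + k + l),
      j + k ≤ (i₁ : ℕ) → i₁ ≤ i₂ → a i₁ ≤ a i₂) :
    IsSEG a := by
  obtain ⟨h, hh⟩ := hl
  obtain ⟨j₂, hj₂⟩ := hj
  obtain ⟨k₂, hk₂⟩ := hk
  have hl2 : l / 2 = h := by omega
  have hjk2 : (j + k) / 2 = j₂ + k₂ := by omega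
  have haEven : ∀ i : Fin (j+k+l), (i:ℕ) < j + k → a i = 2 * (a i / 2) := by
    intro i hi
    rcases Nat.lt_or_ge (i:ℕ) j with hij | hij
    · rw [h0 i hij]
    · obtain ⟨c, hc⟩ := (hev i hij hi).2; omega
  have haOdd : ∀ i : Fin (j+k+l), j + k ≤ (i:ℕ) → a i = 2 * (a i / 2) + 1 := by
    intro i hi; obtain ⟨c, hc⟩ := (hod i hi).2; omega
  have hsuma : ∑ i : Fin (j+k+l), a i = 2 * (∑ i : Fin (j+k+l), a i / 2) + l := by
    have hpt : ∀ i : Fin (j+k+l),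
        a i = 2 * (a i / 2) + (if j + k ≤ (i:ℕ) then 1 else 0) := by
      intro i; by_cases hc : j + k ≤ (i:ℕ)
      · rw [if_pos hc]; exact haOdd i hc
      · rw [if_neg hc]; simpa using haEven i (by omega)
    rw [Finset.sum_congr rfl fun i _ => hpt i, Finset.sum_add_distrib, ← Finset.mul_sum]
    congr 1
    rw [Fin.sum_univ_eq_sum_range (fun x => if j + k ≤ x then 1 else 0) (j+k+l)]
    rw [Finset.sum_ite, Finset.sum_const, Finset.sum_const_zero, add_zero, smul_eq_mul,
      mul_one]
    have : (Finset.range (j+k+l)).filter (fun x => j + k ≤ x) = Finset.Ico (j+k) (j+k+l) := by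
      ext x; simp only [Finset.mem_filter, Finset.mem_range, Finset.mem_Ico]; omega
    rw [this, Nat.card_Ico]; omega
  set S := ∑ i : Fin (j+k+l), a i / 2 with hS
  set M := j₂ + k₂ + l + S with hM
  have hq : (j+k+l) + ∑ i : Fin (j+k+l), a i = 2 * M := by omega
  have hPcc : ∀ i : Fin (j+k+l), Pfun a i + a i / 2 ≤ S := by
    intro i
    have he : Pfun a i + a i / 2 = ∑ i' ∈ insert i (Finset.Iio i), a i' / 2 := by
      rw [Finset.sum_insert (by simp)]; unfold Pfun; ring
    rw [he, hS]
    exact Finset.sum_le_sum_of_subset (Finset.subset_univ _)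
  have hPlt : ∀ i i' : Fin (j+k+l), i < i' → Pfun a i + a i / 2 ≤ Pfun a i' := by
    intro i i' hii
    have he : Pfun a i + a i / 2 = ∑ i' ∈ insert i (Finset.Iio i), a i' / 2 := by
      rw [Finset.sum_insert (by simp)]; unfold Pfun; ring
    rw [he]
    apply Finset.sum_le_sum_of_subset
    intro z hz
    simp only [Finset.mem_insert, Finset.mem_Iio] at hz ⊢
    rcases hz with rfl | hz
    · exact hii
    · exact lt_trans hz hii
  have hr2 : ∀ (i : Fin (j+k+l)) (r : ℕ), r < a i → ¬(j + k ≤ (i:ℕ) ∧ r = a i - 1) →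
      r / 2 < a i / 2 := by
    intro i r hr hnc
    by_cases hc : j + k ≤ (i:ℕ)
    · have hne : r ≠ a i - 1 := fun hr' => hnc ⟨hc, hr'⟩
      have := haOdd i hc; omega
    · have := haEven i (by omega); omega
  have hEb : ∀ i : Fin (j+k+l), ((i:ℕ) - (j+k)) < 2*h+1 := fun i => by
    have := i.isLt; omega
  set f := lab j k l a with hf
  have hfl : ∀ i : Fin (j+k+l), f (Sum.inl i) = labE j k l (i:ℕ) := fun _ => rfl
  have hfr : ∀ (i : Fin (j+k+l)) (r : Fin (a i)),
      f (Sum.inr ⟨i, r⟩) = labL j k l a i (r:ℕ) := fun _ _ => rfl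
  -- leaf sums
  have hleafE : ∀ i : Fin (j+k+l), (i:ℕ) < j + k →
      ∑ m : Fin (a i), f (Sum.inr ⟨i, m⟩) = 0 := by
    intro i hi
    show ∑ m : Fin (a i), labL j k l a i (m:ℕ) = 0
    rw [Fin.sum_univ_eq_sum_range (fun r => labL j k l a i r) (a i), haEven i hi]
    have hcg : ∀ r ∈ Finset.range (2*(a i / 2)), labL j k l a i r =
        sgn r * ((l + (j+k)/2 + 1 + Pfun a i + r/2 : ℕ) : ℤ) := by
      intro r hr
      unfold labL
      rw [if_neg (fun hc => absurd hc.1 (by omega))]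
    rw [Finset.sum_congr rfl hcg]
    exact pairsum (fun t => ((l + (j+k)/2 + 1 + Pfun a i + t : ℕ) : ℤ)) (a i / 2)
  have hleafO : ∀ i : Fin (j+k+l), j + k ≤ (i:ℕ) →
      ∑ m : Fin (a i), f (Sum.inr ⟨i, m⟩) = Zval h ((i:ℕ) - (j+k)) := by
    intro i hi
    show ∑ m : Fin (a i), labL j k l a i (m:ℕ) = _
    rw [Fin.sum_univ_eq_sum_range (fun r => labL j k l a i r) (a i), haOdd i hi,
      Finset.sum_range_succ]
    have hcg : ∀ r ∈ Finset.range (2*(a i / 2)), labL j k l a i r =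
        sgn r * ((l + (j+k)/2 + 1 + Pfun a i + r/2 : ℕ) : ℤ) := by
      intro r hr
      rw [Finset.mem_range] at hr
      have := haOdd i hi
      unfold labL
      rw [if_neg (fun hc => by omega)]
    rw [Finset.sum_congr rfl hcg,
      pairsum (fun t => ((l + (j+k)/2 + 1 + Pfun a i + t : ℕ) : ℤ)) (a i / 2), zero_add]
    unfold labL
    rw [if_pos ⟨hi, by have := haOdd i hi; omega⟩, hl2]
  have hroot : ∑ i : Fin (j+k+l), f (Sum.inl i) = (l : ℤ) := by
    show ∑ i : Fin (j+k+l), labE j k l (i:ℕ) = (l:ℤ)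
    rw [Fin.sum_univ_eq_sum_range (fun x => labE j k l x) (j+k+l)]
    rw [Finset.range_eq_Ico, ← Finset.sum_Ico_consecutive _ (Nat.zero_le (j+k))
      (by omega : j + k ≤ j+k+l)]
    have e1 : ∑ x ∈ Finset.Ico 0 (j+k), labE j k l x = 0 := by
      rw [← Finset.range_eq_Ico]
      have hcg : ∀ x ∈ Finset.range (j+k), labE j k l x =
          sgn x * ((l + 1 + x/2 : ℕ) : ℤ) := by
        intro x hx; rw [Finset.mem_range] at hx; unfold labE; rw [if_pos hx]
      rw [Finset.sum_congr rfl hcg, show j + k = 2*(j₂+k₂) by omega]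
      exact pairsum (fun t => ((l + 1 + t : ℕ) : ℤ)) (j₂+k₂)
    have e2 : ∑ x ∈ Finset.Ico (j+k) (j+k+l), labE j k l x = (l:ℤ) := by
      rw [Finset.sum_Ico_eq_sum_range, show j+k+l - (j+k) = l by omega]
      have hcg : ∀ x ∈ Finset.range l, labE j k l (j+k+x) = Eval h x := by
        intro x hx
        unfold labE
        rw [if_neg (by omega), hl2, show j+k+x - (j+k) = x by omega]
      rw [Finset.sum_congr rfl hcg, show l = 2*h+1 by omega, Eval_sum]
      push_cast; omega
    rw [e1, e2, zero_add]
  -- vertexSum closed forms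
  have hvE : ∀ i : Fin (j+k+l), (i:ℕ) < j + k →
      vertexSum a f (some (Sum.inl i)) = sgn i * ((l + 1 + (i:ℕ)/2 : ℕ) : ℤ) := by
    intro i hi
    show f (Sum.inl i) + ∑ m : Fin (a i), f (Sum.inr ⟨i, m⟩) = _
    rw [hleafE i hi, add_zero]
    show labE j k l (i:ℕ) = _
    unfold labE; rw [if_pos hi]
  have hvO : ∀ i : Fin (j+k+l), j + k ≤ (i:ℕ) →
      vertexSum a f (some (Sum.inl i)) = Cval h ((i:ℕ) - (j+k)) := by
    intro i hi
    show f (Sum.inl i) + ∑ m : Fin (a i), f (Sum.inr ⟨i, m⟩) = _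
    rw [hleafO i hi]
    show labE j k l (i:ℕ) + _ = _
    unfold labE Cval; rw [if_neg (by omega), hl2]
  have hvnone : vertexSum a f none = (l:ℤ) := hroot
  -- injectivity of f
  have hfinj : Function.Injective f := by
    rintro (i | ⟨i, r⟩) (i' | ⟨i', r'⟩) hv
    · have hv' : labE j k l (i:ℕ) = labE j k l (i':ℕ) := hv
      unfold labE at hv'
      rw [hl2] at hv'
      split_ifs at hv' with h1 h2 h2
      · have : (i:ℕ) = (i':ℕ) := by
          unfold sgn at hv'; split_ifs at hv' <;> omega
        exact congrArg Sum.inl (Fin.ext this)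
      · exfalso
        obtain ⟨hb1, hb2, hb3⟩ := Eval_bound (hEb i')
        unfold sgn at hv'; split_ifs at hv' <;> omega
      · exfalso
        obtain ⟨hb1, hb2, hb3⟩ := Eval_bound (hEb i)
        unfold sgn at hv'; split_ifs at hv' <;> omega
      · have : (i:ℕ) = (i':ℕ) := by
          have := Eval_inj (hEb i) (hEb i') hv'
          omega
        exact congrArg Sum.inl (Fin.ext this)
    · exfalso
      have hv' : labE j k l (i:ℕ) = labL j k l a i' (r':ℕ) := hv
      unfold labE labL at hv'
      rw [hl2] at hv'
      split_ifs at hv' with h1 h2 h2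
      · obtain ⟨hb1, hb2, hb3⟩ := Zval_bound (hEb i')
        unfold sgn at hv'; split_ifs at hv' <;> omega
      · unfold sgn at hv'; split_ifs at hv' <;> omega
      · exact Eval_ne_Zval (hEb i) (hEb i') hv'
      · obtain ⟨hb1, hb2, hb3⟩ := Eval_bound (hEb i)
        unfold sgn at hv'; split_ifs at hv' <;> omega
    · exfalso
      have hv' : labL j k l a i (r:ℕ) = labE j k l (i':ℕ) := hv
      unfold labE labL at hv'
      rw [hl2] at hv'
      split_ifs at hv' with h1 h2 h2
      · obtain ⟨hb1, hb2, hb3⟩ := Zval_bound (hEb i)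
        unfold sgn at hv'; split_ifs at hv' <;> omega
      · exact Eval_ne_Zval (hEb i') (hEb i) hv'.symm
      · unfold sgn at hv'; split_ifs at hv' <;> omega
      · obtain ⟨hb1, hb2, hb3⟩ := Eval_bound (hEb i')
        unfold sgn at hv'; split_ifs at hv' <;> omega
    · have hv' : labL j k l a i (r:ℕ) = labL j k l a i' (r':ℕ) := hv
      unfold labL at hv'
      rw [hl2] at hv'
      split_ifs at hv' with h1 h2 h2
      · -- both special
        have hii : (i:ℕ) = (i':ℕ) := by
          have := Zval_inj (hEb i) (hEb i') hv'
          omega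
        obtain rfl : i = i' := Fin.ext hii
        have hrr : (r:ℕ) = (r':ℕ) := by rw [h1.2, h2.2]
        rw [Fin.ext hrr]
      · exfalso
        obtain ⟨hb1, hb2, hb3⟩ := Zval_bound (hEb i)
        unfold sgn at hv'; split_ifs at hv' <;> omega
      · exfalso
        obtain ⟨hb1, hb2, hb3⟩ := Zval_bound (hEb i')
        unfold sgn at hv'; split_ifs at hv' <;> omega
      · -- both flex
        have hri : (r:ℕ)/2 < a i / 2 := hr2 i r r.isLt h1
        have hri' : (r':ℕ)/2 < a i' / 2 := hr2 i' r' r'.isLt h2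
        rcases lt_trichotomy i i' with hlt | heq | hgt
        · exfalso
          have := hPlt i i' hlt
          unfold sgn at hv'; split_ifs at hv' <;> omega
        · obtain rfl := heq
          have hrr : (r:ℕ) = (r':ℕ) := by
            unfold sgn at hv'; split_ifs at hv' <;> omega
          rw [Fin.ext hrr]
        · exfalso
          have := hPlt i' i hgt
          unfold sgn at hv'; split_ifs at hv' <;> omega
  -- injectivity of vertexSum
  have hvinj : Function.Injective (vertexSum a f) := by
    have hvleaf : ∀ (i : Fin (j+k+l)) (r : Fin (a i)),
        vertexSum a f (some (Sum.inr ⟨i, r⟩)) = labL j k l a i (r:ℕ) := fun i r => rfl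
    have hlabL_ne_l : ∀ (i : Fin (j+k+l)) (r : Fin (a i)), labL j k l a i (r:ℕ) ≠ (l:ℤ) := by
      intro i r
      unfold labL
      rw [hl2]
      split_ifs with hc
      · intro he
        rw [show (l:ℤ) = 2*(h:ℤ)+1 by push_cast; omega] at he
        exact Zval_ne_top he
      · unfold sgn; split_ifs <;> omega
    have hlabL_ne_edge : ∀ (i₀ : Fin (j+k+l)) (i : Fin (j+k+l)) (r : Fin (a i)),
        (i₀:ℕ) < j + k →
        labL j k l a i (r:ℕ) ≠ sgn i₀ * ((l + 1 + (i₀:ℕ)/2 : ℕ) : ℤ) := by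
      intro i₀ i r hi₀
      unfold labL; rw [hl2]
      split_ifs with hc
      · obtain ⟨hb1, hb2, hb3⟩ := Zval_bound (hEb i)
        unfold sgn; split_ifs <;> omega
      · unfold sgn; split_ifs <;> omega
    have hlabL_ne_C : ∀ (i₀ : Fin (j+k+l)) (i : Fin (j+k+l)) (r : Fin (a i)),
        labL j k l a i (r:ℕ) ≠ Cval h ((i₀:ℕ) - (j+k)) := by
      intro i₀ i r
      unfold labL; rw [hl2]
      split_ifs with hc
      · exact fun he => Cval_ne_Zval (hEb i₀) (hEb i) he.symm
      · obtain ⟨hb1, hb2⟩ := Cval_bound (hEb i₀)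
        unfold sgn; split_ifs <;> omega
    rintro (_ | (i | ⟨i, r⟩)) (_ | (i' | ⟨i', r'⟩)) hv
    · rfl
    · exfalso
      rw [hvnone] at hv
      by_cases hc : (i':ℕ) < j + k
      · rw [hvE i' hc] at hv
        unfold sgn at hv; split_ifs at hv <;> omega
      · rw [hvO i' (by omega)] at hv
        obtain ⟨hb1, hb2⟩ := Cval_bound (hEb i')
        omega
    · exfalso
      rw [hvnone, hvleaf i' r'] at hv
      exact hlabL_ne_l i' r' hv.symm
    · exfalso
      rw [hvnone] at hv
      by_cases hc : (i:ℕ) < j + k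
      · rw [hvE i hc] at hv
        unfold sgn at hv; split_ifs at hv <;> omega
      · rw [hvO i (by omega)] at hv
        obtain ⟨hb1, hb2⟩ := Cval_bound (hEb i)
        omega
    · -- child child
      by_cases hc : (i:ℕ) < j + k <;> by_cases hc' : (i':ℕ) < j + k
      · rw [hvE i hc, hvE i' hc'] at hv
        have : (i:ℕ) = (i':ℕ) := by
          unfold sgn at hv; split_ifs at hv <;> omega
        rw [Fin.ext this]
      · exfalso
        rw [hvE i hc, hvO i' (by omega)] at hv
        obtain ⟨hb1, hb2⟩ := Cval_bound (hEb i')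
        unfold sgn at hv; split_ifs at hv <;> omega
      · exfalso
        rw [hvO i (by omega), hvE i' hc'] at hv
        obtain ⟨hb1, hb2⟩ := Cval_bound (hEb i)
        unfold sgn at hv; split_ifs at hv <;> omega
      · rw [hvO i (by omega), hvO i' (by omega)] at hv
        have : (i:ℕ) = (i':ℕ) := by
          have := Cval_inj (hEb i) (hEb i') hv
          omega
        rw [Fin.ext this]
    · exfalso
      by_cases hc : (i:ℕ) < j + k
      · rw [hvE i hc, hvleaf i' r'] at hv
        exact hlabL_ne_edge i i' r' hc hv.symm
      · rw [hvO i (by omega), hvleaf i' r'] at hv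
        exact hlabL_ne_C i i' r' hv.symm
    · exfalso
      rw [hvnone, hvleaf i r] at hv
      exact hlabL_ne_l i r hv
    · exfalso
      by_cases hc : (i':ℕ) < j + k
      · rw [hvE i' hc, hvleaf i r] at hv
        exact hlabL_ne_edge i' i r hc hv
      · rw [hvO i' (by omega), hvleaf i r] at hv
        exact hlabL_ne_C i' i r hv
    · rw [hvleaf i r, hvleaf i' r'] at hv
      have : (Sum.inr ⟨i, r⟩ : RTEdge (j+k+l) a) = Sum.inr ⟨i', r'⟩ := hfinj hv
      rw [this]
  -- membership
  have hfmem : ∀ x, f x ∈ segSet ((j+k+l) + ∑ i, a i) := by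
    rw [hq, segSet_even_s10]
    intro x
    rw [Finset.mem_erase, Finset.mem_Icc]
    obtain (i | ⟨i, r⟩) := x
    · rw [hfl i]
      unfold labE; rw [hl2]
      split_ifs with h1
      · unfold sgn; split_ifs <;> refine ⟨by omega, by omega, by omega⟩
      · obtain ⟨hb1, hb2, hb3⟩ := Eval_bound (hEb i)
        exact ⟨hb1, by omega, by omega⟩
    · rw [hfr i r]
      unfold labL; rw [hl2]
      split_ifs with h1
      · obtain ⟨hb1, hb2, hb3⟩ := Zval_bound (hEb i)
        exact ⟨hb1, by omega, by omega⟩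
      · have hri : (r:ℕ)/2 < a i / 2 := hr2 i r r.isLt h1
        have := hPcc i
        unfold sgn; split_ifs <;> refine ⟨by omega, by omega, by omega⟩
  have hvmem : ∀ x, vertexSum a f x ∈ segSet ((j+k+l) + ∑ i, a i + 1) := by
    rw [show (j+k+l) + ∑ i, a i + 1 = 2*M + 1 by omega, segSet_odd_s10]
    intro x
    rw [Finset.mem_Icc]
    obtain (_ | (i | ⟨i, r⟩)) := x
    · rw [hvnone]; constructor <;> omega
    · by_cases hc : (i:ℕ) < j + k
      · rw [hvE i hc]
        unfold sgn; split_ifs <;> constructor <;> omega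
      · rw [hvO i (by omega)]
        obtain ⟨hb1, hb2⟩ := Cval_bound (hEb i)
        constructor <;> omega
    · rw [show vertexSum a f (some (Sum.inr ⟨i, r⟩)) = labL j k l a i (r:ℕ) from rfl]
      unfold labL; rw [hl2]
      split_ifs with h1
      · obtain ⟨hb1, hb2, hb3⟩ := Zval_bound (hEb i)
        constructor <;> omega
      · have hri : (r:ℕ)/2 < a i / 2 := hr2 i r r.isLt h1
        have := hPcc i
        unfold sgn; split_ifs <;> constructor <;> omega
  -- cards
  have hcard1 : (segSet ((j+k+l) + ∑ i, a i)).card = Fintype.card (RTEdge (j+k+l) a) := by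
    rw [hq, card_segSet_even]
    simp only [RTEdge, Fintype.card_sum, Fintype.card_sigma, Fintype.card_fin]
    omega
  have hcard2 : (segSet ((j+k+l) + ∑ i, a i + 1)).card
      = Fintype.card (RTVertex (j+k+l) a) := by
    rw [show (j+k+l) + ∑ i, a i + 1 = 2*M + 1 by omega, card_segSet_odd]
    simp only [RTVertex, RTEdge, Fintype.card_option, Fintype.card_sum, Fintype.card_sigma,
      Fintype.card_fin]
    omega
  exact ⟨f, bijOn_of_injective f _ hfinj hfmem hcard1,
    bijOn_of_injective (vertexSum a f) _ hvinj hvmem hcard2⟩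
end

section
/- For every odd integer j ≥ 1 and every integer l ≥ 3, the rooted tree RT(0^j, 1^l) is NOT super edge-graceful. -/
/-- For every odd integer `j ≥ 1` and every integer `l ≥ 3`, the rooted tree
`RT(0^j, 1^l)` is not super edge-graceful. -/
theorem stmt16 (j l : ℕ) (hj : Odd j) (hj1 : 1 ≤ j) (hl : 3 ≤ l) :
    ¬ IsSEG (fun i : Fin (j + l) => if (i : ℕ) < j then 0 else 1) := by
  rintro ⟨f, hf, hg⟩
  have hsum : ∑ i : Fin (j+l), (fun i : Fin (j + l) => if (i : ℕ) < j then 0 else 1) i = l := by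
    rw [Fin.sum_univ_eq_sum_range (fun i => if i < j then 0 else 1)]
    rw [Finset.sum_ite, Finset.sum_const, Finset.sum_const]
    have : Finset.filter (fun i => ¬ i < j) (Finset.range (j+l)) = Finset.Ico j (j+l) := by
      ext x; simp [Finset.mem_Ico]; omega
    rw [this]
    simp
  have hjodd := Nat.odd_iff.mp hj
  rw [hsum] at hf hg
  have h0S : (0 : ℤ) ∈ segSet ((j + l) + l) := by
    rw [segSet, if_neg (by omega)]
    simp
    positivity
  have h0T : (0 : ℤ) ∉ segSet ((j + l) + l + 1) := by
    rw [segSet, if_pos (by omega)]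
    exact Finset.notMem_erase 0 _
  obtain ⟨e, -, he⟩ := hf.surjOn (by exact_mod_cast h0S)
  have hmap : ∀ v, vertexSum (fun i : Fin (j + l) => if (i : ℕ) < j then 0 else 1) f v
      ∈ segSet ((j + l) + l + 1) := by
    intro v
    exact_mod_cast hg.mapsTo (Set.mem_univ v)
  match e with
  | Sum.inl i =>
    by_cases hi : (i : ℕ) < j
    · have hemp : IsEmpty (Fin (if (i : ℕ) < j then 0 else 1)) := by
        rw [if_pos hi]; infer_instance
      have hz : vertexSum (fun i : Fin (j + l) => if (i : ℕ) < j then 0 else 1) f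
          (some (Sum.inl i)) = 0 := by
        simp only [vertexSum]
        rw [Finset.univ_eq_empty, Finset.sum_empty, he, add_zero]
      exact h0T (hz ▸ hmap (some (Sum.inl i)))
    · have h1 : 0 < if (i : ℕ) < j then 0 else 1 := by rw [if_neg hi]; norm_num
      haveI : Subsingleton (Fin (if (i : ℕ) < j then 0 else 1)) := by
        rw [if_neg hi]; infer_instance
      have hsum1 : ∑ m : Fin (if (i : ℕ) < j then 0 else 1), f (Sum.inr ⟨i, m⟩)
          = f (Sum.inr ⟨i, ⟨0, h1⟩⟩) := Fintype.sum_subsingleton _ (⟨0, h1⟩ : Fin (if (i : ℕ) < j then 0 else 1))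
      have heq : vertexSum (fun i : Fin (j + l) => if (i : ℕ) < j then 0 else 1) f
            (some (Sum.inl i))
          = vertexSum (fun i : Fin (j + l) => if (i : ℕ) < j then 0 else 1) f
            (some (Sum.inr ⟨i, ⟨0, h1⟩⟩)) := by
        simp only [vertexSum]
        rw [he, hsum1, zero_add]
      have := hg.injOn (Set.mem_univ _) (Set.mem_univ _) heq
      simp at this
  | Sum.inr ⟨i, m⟩ =>
    have hz : vertexSum (fun i : Fin (j + l) => if (i : ℕ) < j then 0 else 1) f
        (some (Sum.inr ⟨i, m⟩)) = 0 := he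
    exact h0T (hz ▸ hmap (some (Sum.inr ⟨i, m⟩)))
end
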